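/- arXiv:2001.04628 — 6 statements merged into one kernel-verified Lean document; each statement's English description precedes it below -/
import Mathlib

section
/- Let T : H → H be a quasi-nonexpansive operator with Fix(T) ≠ ∅, and let u be a strong global solution of the evolution equation u'(t) = θ(t)(T(u(t)) − u(t)) + f(t), u(t₀) = u₀. Then ∫_{t₀}^{∞} θ(s)‖T(u(s)) − u(s)‖² ds < +∞. -/
open MeasureTheory Filter Set
open scoped RealInnerProductSpace

section Aux

variable {H : Type*} [NormedAddCommGroup H] [InnerProductSpace ℝ H] [CompleteSpace H]

/-- Quasi-nonexpansiveness gives the key inner-product inequality. -/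
lemma qne_inner_bound {T : H → H} (hT : ∀ (y x : H), T x = x → ‖T y - x‖ ≤ ‖y - x‖)
    {x : H} (hx : T x = x) (y : H) :
    ⟪T y - y, y - x⟫ ≤ -(1/2) * ‖T y - y‖ ^ 2 := by
  have h := hT y x hx
  have h2 : ‖T y - x‖ ^ 2 ≤ ‖y - x‖ ^ 2 := by
    nlinarith [norm_nonneg (T y - x), norm_nonneg (y - x)]
  have hdecomp : T y - x = (T y - y) + (y - x) := by abel
  have hexp := norm_add_sq_real (T y - y) (y - x)
  rw [hdecomp] at h2
  linarith [h2, hexp]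

/-- Integrability of `s ↦ ⟪F s, ∫_{(a,s]} F⟫` on `(a,b]`. -/
lemma inner_primitive_integrable (F : ℝ → H) {a b : ℝ}
    (hF : IntegrableOn F (Ioc a b)) :
    IntegrableOn (fun s => ⟪F s, ∫ r in Ioc a s, F r⟫) (Ioc a b) := by
  rcases le_or_gt a b with hab | hab
  · have hPcont : ContinuousOn (fun s => ∫ r in Ioc a s, F r) (Icc a b) :=
      intervalIntegral.continuousOn_primitive ((integrableOn_Icc_iff_integrableOn_Ioc).mpr hF)
    have hPasm : AEStronglyMeasurable (fun s => ∫ r in Ioc a s, F r)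
        (volume.restrict (Ioc a b)) :=
      (hPcont.aestronglyMeasurable measurableSet_Icc).mono_measure
        (Measure.restrict_mono Ioc_subset_Icc_self le_rfl)
    apply Integrable.mono' ((hF.norm).mul_const (∫ r in Ioc a b, ‖F r‖))
      (hF.aestronglyMeasurable.inner hPasm)
    filter_upwards [ae_restrict_mem measurableSet_Ioc] with s hs
    calc ‖⟪F s, ∫ r in Ioc a s, F r⟫‖ ≤ ‖F s‖ * ‖∫ r in Ioc a s, F r‖ :=
          norm_inner_le_norm _ _
      _ ≤ ‖F s‖ * ∫ r in Ioc a b, ‖F r‖ := by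
          apply mul_le_mul_of_nonneg_left ?_ (norm_nonneg _)
          calc ‖∫ r in Ioc a s, F r‖ ≤ ∫ r in Ioc a s, ‖F r‖ :=
                norm_integral_le_integral_norm _
            _ ≤ ∫ r in Ioc a b, ‖F r‖ :=
                setIntegral_mono_set hF.norm
                  (Eventually.of_forall fun r => norm_nonneg _)
                  (HasSubset.Subset.eventuallyLE (Ioc_subset_Ioc_right hs.2))
  · rw [Ioc_eq_empty (not_lt.mpr hab.le)]
    exact integrableOn_empty

/-- Key Fubini identity: `‖∫_{(a,b]} F‖² = 2 ∫_{(a,b]} ⟪F s, ∫_{(a,s]} F⟫ ds`. -/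
lemma sq_norm_setIntegral (F : ℝ → H) {a b : ℝ} (hab : a ≤ b)
    (hF : IntegrableOn F (Ioc a b)) :
    ‖∫ s in Ioc a b, F s‖ ^ 2 = 2 * ∫ s in Ioc a b, ⟪F s, ∫ r in Ioc a s, F r⟫ := by
  set μ := volume.restrict (Ioc a b) with hμ
  set P : ℝ → H := fun s => ∫ r in Ioc a s, F r with hP
  set I : H := ∫ s in Ioc a b, F s with hI
  have hFμ : Integrable F μ := hF
  -- integrabilities
  have hFP_int : Integrable (fun s => ⟪F s, P s⟫) μ := inner_primitive_integrable F hF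
  have hFI_int : Integrable (fun s => ⟪F s, I⟫) μ := hFμ.inner_const I
  have hFQ_int : Integrable (fun s => ⟪F s, I - P s⟫) μ := by
    have h := hFI_int.sub hFP_int
    apply h.congr
    filter_upwards with s
    simp [inner_sub_right]
  -- step 1
  have hstep1 : ‖I‖ ^ 2 = ∫ s, ⟪F s, I⟫ ∂μ := by
    have h1 : ⟪I, I⟫ = ∫ s, ⟪I, F s⟫ ∂μ := (integral_inner hFμ I).symm
    have h2 : ∫ s, ⟪I, F s⟫ ∂μ = ∫ s, ⟪F s, I⟫ ∂μ := by
      apply integral_congr_ae; filter_upwards with s; exact real_inner_comm _ _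
    rw [← real_inner_self_eq_norm_sq, h1, h2]
  -- split of I
  have hsplit : ∀ s ∈ Ioc a b, I = P s + ∫ r in Ioc s b, F r := by
    intro s hs
    rw [hI, hP]
    rw [← Ioc_union_Ioc_eq_Ioc hs.1.le hs.2]
    exact setIntegral_union (Ioc_disjoint_Ioc_of_le le_rfl) measurableSet_Ioc
      (hF.mono_set (Ioc_subset_Ioc_right hs.2)) (hF.mono_set (Ioc_subset_Ioc_left hs.1.le))
  -- the kernel
  set G : ℝ × ℝ → ℝ := fun p => if p.2 ≤ p.1 then ⟪F p.1, F p.2⟫ else 0 with hG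
  have hG_ind : G = Set.indicator {p : ℝ × ℝ | p.2 ≤ p.1} (fun p => ⟪F p.1, F p.2⟫) := by
    ext p
    by_cases h : p.2 ≤ p.1 <;> simp [hG, Set.indicator_apply, h]
  have hG_int : Integrable G (μ.prod μ) := by
    have hK : AEStronglyMeasurable (fun p : ℝ × ℝ => ⟪F p.1, F p.2⟫) (μ.prod μ) :=
      (hFμ.aestronglyMeasurable.comp_fst).inner (hFμ.aestronglyMeasurable.comp_snd)
    have hGasm : AEStronglyMeasurable G (μ.prod μ) := by
      rw [hG_ind]
      exact hK.indicator ((isClosed_le continuous_snd continuous_fst).measurableSet)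
    apply Integrable.mono' (hFμ.norm.mul_prod hFμ.norm) hGasm
    filter_upwards with p
    by_cases h : p.2 ≤ p.1
    · simp only [hG, if_pos h]
      exact (norm_inner_le_norm _ _)
    · simp only [hG, if_neg h, norm_zero]
      positivity
  -- inner integrals
  have h_left : ∀ s ∈ Ioc a b, ∫ r, G (s, r) ∂μ = ⟪F s, P s⟫ := by
    intro s hs
    have h1 : (fun r => G (s, r)) = (Iic s).indicator (fun r => ⟪F s, F r⟫) := by
      ext r
      by_cases h : r ≤ s <;> simp [hG, Set.indicator_apply, h]
    rw [h1, integral_indicator measurableSet_Iic, hμ,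
      Measure.restrict_restrict measurableSet_Iic]
    have h2 : Iic s ∩ Ioc a b = Ioc a s := by
      rw [inter_comm, Ioc_inter_Iic, min_eq_right hs.2]
    rw [h2]
    exact integral_inner (hF.mono_set (Ioc_subset_Ioc_right hs.2)) (F s)
  have h_right : ∀ r ∈ Ioc a b, ∫ s, G (s, r) ∂μ = ⟪F r, I⟫ - ⟪F r, P r⟫ := by
    intro r hr
    have h1 : (fun s => G (s, r)) = (Ici r).indicator (fun s => ⟪F s, F r⟫) := by
      ext s
      by_cases h : r ≤ s <;> simp [hG, Set.indicator_apply, h]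
    rw [h1, integral_indicator measurableSet_Ici, hμ,
      Measure.restrict_restrict measurableSet_Ici]
    have h2 : Ici r ∩ Ioc a b = Icc r b := by
      ext y
      constructor
      · rintro ⟨h1', h2', h3'⟩; exact ⟨h1', h3'⟩
      · rintro ⟨h1', h2'⟩; exact ⟨h1', lt_of_lt_of_le hr.1 h1', h2'⟩
    rw [h2, integral_Icc_eq_integral_Ioc]
    have h3 : ∫ s in Ioc r b, ⟪F s, F r⟫ = ⟪F r, ∫ s in Ioc r b, F s⟫ := by
      rw [← integral_inner (hF.mono_set (Ioc_subset_Ioc_left hr.1.le)) (F r)]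
      apply integral_congr_ae
      filter_upwards with s
      exact real_inner_comm _ _
    rw [h3]
    have h4 : (∫ s in Ioc r b, F s) = I - P r := by
      rw [hsplit r hr]; abel
    rw [h4, inner_sub_right]
  -- Fubini
  have hswap : ∫ s, (∫ r, G (s, r) ∂μ) ∂μ = ∫ r, (∫ s, G (s, r) ∂μ) ∂μ :=
    integral_integral_swap (f := fun s r => G (s, r)) hG_int
  have hkey : ∫ s, ⟪F s, P s⟫ ∂μ = ∫ r, (⟪F r, I⟫ - ⟪F r, P r⟫) ∂μ := by
    calc ∫ s, ⟪F s, P s⟫ ∂μ = ∫ s, (∫ r, G (s, r) ∂μ) ∂μ := by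
          apply integral_congr_ae
          filter_upwards [ae_restrict_mem measurableSet_Ioc] with s hs
          exact (h_left s hs).symm
      _ = ∫ r, (∫ s, G (s, r) ∂μ) ∂μ := hswap
      _ = ∫ r, (⟪F r, I⟫ - ⟪F r, P r⟫) ∂μ := by
          apply integral_congr_ae
          filter_upwards [ae_restrict_mem measurableSet_Ioc] with r hr
          exact h_right r hr
  have hsub : ∫ r, (⟪F r, I⟫ - ⟪F r, P r⟫) ∂μ
      = (∫ r, ⟪F r, I⟫ ∂μ) - ∫ r, ⟪F r, P r⟫ ∂μ := integral_sub hFI_int hFP_int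
  rw [hstep1]
  have := hkey.trans hsub
  linarith [this]

end Aux

set_option maxHeartbeats 2000000 in
theorem stmt_0
    {H : Type*} [NormedAddCommGroup H] [InnerProductSpace ℝ H] [CompleteSpace H]
    (T : H → H)
    (hT : ∀ (y x : H), T x = x → ‖T y - x‖ ≤ ‖y - x‖)
    (hfix : ∃ x : H, T x = x)
    (t₀ : ℝ) (ht₀ : 0 < t₀)
    (θ : ℝ → ℝ) (hθ : ∀ t, t₀ ≤ t → 0 ≤ θ t)
    (hθint : ∀ b : ℝ, IntervalIntegrable θ volume t₀ b)
    (f : ℝ → H)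
    (hfint : IntegrableOn (fun s => ‖f s‖) (Set.Ici t₀))
    (u : ℝ → H) (u₀ : H)
    (huint : ∀ t, t₀ ≤ t →
      IntervalIntegrable (fun s => θ s • (T (u s) - u s) + f s) volume t₀ t)
    (husol : ∀ t, t₀ ≤ t →
      u t = u₀ + ∫ s in t₀..t, (θ s • (T (u s) - u s) + f s)) :
    ∫⁻ s in Set.Ici t₀, ENNReal.ofReal (θ s * ‖T (u s) - u s‖ ^ 2) < ⊤ := by
  obtain ⟨x, hx⟩ := hfix
  set a := t₀ with ha
  set F : ℝ → H := fun s => θ s • (T (u s) - u s) + f s with hF_def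
  have hFI : ∀ b, a ≤ b → IntegrableOn F (Ioc a b) := fun b hb =>
    (intervalIntegrable_iff_integrableOn_Ioc_of_le hb).mp (huint b hb)
  set P : ℝ → H := fun t => ∫ s in Ioc a t, F s with hP_def
  have huP : ∀ t, a ≤ t → u t = u₀ + P t := fun t ht => by
    rw [husol t ht, intervalIntegral.integral_of_le ht]
  have hPcont : ∀ b, ContinuousOn P (Icc a b) := by
    intro b
    rcases le_or_gt a b with hb | hb
    · exact intervalIntegral.continuousOn_primitive ((integrableOn_Icc_iff_integrableOn_Ioc).mpr (hFI b hb))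
    · rw [Icc_eq_empty (not_le.mpr hb)]; exact continuousOn_empty _
  have hucont : ∀ b, ContinuousOn (fun s => u s - x) (Icc a b) := by
    intro b
    have h1 : ContinuousOn (fun s => (u₀ + P s) - x) (Icc a b) :=
      (continuousOn_const.add (hPcont b)).sub continuousOn_const
    apply h1.congr
    intro s hs
    show u s - x = u₀ + P s - x
    rw [huP s hs.1]
  -- integrability of the main inner product
  have key_int : ∀ b, a ≤ b → IntegrableOn (fun s => ⟪F s, u s - x⟫) (Ioc a b) := by
    intro b hb
    have h1 : IntegrableOn (fun s => ⟪F s, u₀ - x⟫) (Ioc a b) := (hFI b hb).inner_const _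
    have h2 : IntegrableOn (fun s => ⟪F s, P s⟫) (Ioc a b) :=
      inner_primitive_integrable F (hFI b hb)
    apply (h1.add h2).congr
    filter_upwards [ae_restrict_mem measurableSet_Ioc] with s hs
    have hus : u s - x = (u₀ - x) + P s := by rw [huP s hs.1.le]; abel
    show ⟪F s, u₀ - x⟫ + ⟪F s, P s⟫ = ⟪F s, u s - x⟫
    rw [hus, inner_add_right]
  -- the energy identity
  have hstar : ∀ t, a ≤ t →
      ‖u t - x‖ ^ 2 = ‖u₀ - x‖ ^ 2 + 2 * ∫ s in Ioc a t, ⟪F s, u s - x⟫ := by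
    intro t ht
    have hut : u t - x = (u₀ - x) + P t := by rw [huP t ht]; abel
    have hsq := sq_norm_setIntegral F ht (hFI t ht)
    have hmid : ⟪u₀ - x, P t⟫ = ∫ s in Ioc a t, ⟪u₀ - x, F s⟫ :=
      (integral_inner (hFI t ht) (u₀ - x)).symm
    have hsum : ∫ s in Ioc a t, ⟪F s, u s - x⟫
        = (∫ s in Ioc a t, ⟪u₀ - x, F s⟫) + ∫ s in Ioc a t, ⟪F s, P s⟫ := by
      rw [← integral_add ((hFI t ht).const_inner (u₀ - x))
        (inner_primitive_integrable F (hFI t ht))]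
      apply setIntegral_congr_fun measurableSet_Ioc
      intro s hs
      have hus : u s - x = (u₀ - x) + P s := by rw [huP s hs.1.le]; abel
      show ⟪F s, u s - x⟫ = ⟪u₀ - x, F s⟫ + ⟪F s, P s⟫
      rw [hus, inner_add_right, real_inner_comm (u₀ - x) (F s)]
    rw [hut, norm_add_sq_real, hsum, hmid]
    have : ‖P t‖ ^ 2 = 2 * ∫ s in Ioc a t, ⟪F s, P s⟫ := hsq
    linarith [this]
  -- uniform bound on ‖u t - x‖
  set B : ℝ := ∫ s in Ici a, ‖f s‖ with hB
  have hB0 : 0 ≤ B := setIntegral_nonneg measurableSet_Ici fun s _ => norm_nonneg _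
  have hBle : ∀ c, a ≤ c → ∫ s in Ioc a c, ‖f s‖ ≤ B := by
    intro c hc
    apply setIntegral_mono_set hfint
      (Eventually.of_forall fun s => norm_nonneg _)
      (HasSubset.Subset.eventuallyLE (fun y hy => hy.1.le))
  set M : ℝ := B + Real.sqrt (B ^ 2 + ‖u₀ - x‖ ^ 2) with hM_def
  have hM0 : 0 ≤ M := add_nonneg hB0 (Real.sqrt_nonneg _)
  have hM : ∀ t, a ≤ t → ‖u t - x‖ ≤ M := by
    intro t ht
    have hne : (Icc a t).Nonempty := ⟨a, left_mem_Icc.mpr ht⟩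
    obtain ⟨c, hcmem, hcmax⟩ := isCompact_Icc.exists_isMaxOn hne
      ((hucont t).norm)
    have hmax : ∀ s ∈ Icc a t, ‖u s - x‖ ≤ ‖u c - x‖ := fun s hs => hcmax hs
    set m := ‖u c - x‖ with hm_def
    have hm0 : 0 ≤ m := norm_nonneg _
    have hpt : ∀ s ∈ Ioc a c, ⟪F s, u s - x⟫ ≤ ‖f s‖ * m := by
      intro s hs
      have hs' : a ≤ s := hs.1.le
      have hsc : s ∈ Icc a t := ⟨hs', hs.2.trans hcmem.2⟩
      have h1 := qne_inner_bound hT hx (u s)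
      have hθs := hθ s hs'
      have h2 : ⟪f s, u s - x⟫ ≤ ‖f s‖ * m :=
        le_trans (real_inner_le_norm _ _)
          (mul_le_mul_of_nonneg_left (hmax s hsc) (norm_nonneg _))
      have hsplit : ⟪F s, u s - x⟫
          = θ s * ⟪T (u s) - u s, u s - x⟫ + ⟪f s, u s - x⟫ := by
        have hFs : F s = θ s • (T (u s) - u s) + f s := rfl
        rw [hFs, inner_add_left, real_inner_smul_left]
      have h3 : θ s * ⟪T (u s) - u s, u s - x⟫ ≤ 0 := by
        nlinarith [mul_le_mul_of_nonneg_left h1 hθs, sq_nonneg ‖T (u s) - u s‖]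
      linarith
    have hint_rhs : IntegrableOn (fun s => ‖f s‖ * m) (Ioc a c) :=
      (hfint.mono_set (fun y hy => hy.1.le)).mul_const m
    have hineq : ∫ s in Ioc a c, ⟪F s, u s - x⟫ ≤ ∫ s in Ioc a c, ‖f s‖ * m :=
      setIntegral_mono_on (key_int c hcmem.1) hint_rhs measurableSet_Ioc hpt
    have hmulout : ∫ s in Ioc a c, ‖f s‖ * m = (∫ s in Ioc a c, ‖f s‖) * m :=
      integral_mul_const m _
    have hm2 : m ^ 2 ≤ ‖u₀ - x‖ ^ 2 + 2 * (B * m) := by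
      have hsc := hstar c hcmem.1
      have h5 : (∫ s in Ioc a c, ‖f s‖) * m ≤ B * m :=
        mul_le_mul_of_nonneg_right (hBle c hcmem.1) hm0
      rw [hm_def]
      calc ‖u c - x‖ ^ 2 = ‖u₀ - x‖ ^ 2 + 2 * ∫ s in Ioc a c, ⟪F s, u s - x⟫ := hsc
        _ ≤ ‖u₀ - x‖ ^ 2 + 2 * (B * m) := by
            rw [hmulout] at hineq
            linarith [hineq, h5]
    have hmM : m ≤ M := by
      rcases le_or_gt m B with h | h
      · have : 0 ≤ Real.sqrt (B ^ 2 + ‖u₀ - x‖ ^ 2) := Real.sqrt_nonneg _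
        rw [hM_def]; linarith
      · have h1 : (m - B) ^ 2 ≤ B ^ 2 + ‖u₀ - x‖ ^ 2 := by nlinarith
        have h2 : m - B ≤ Real.sqrt (B ^ 2 + ‖u₀ - x‖ ^ 2) := by
          have h3 := Real.sqrt_le_sqrt h1
          rwa [Real.sqrt_sq (by linarith : (0:ℝ) ≤ m - B)] at h3
        rw [hM_def]; linarith
    exact le_trans (hmax t ⟨ht, le_rfl⟩) hmM
  -- the dominating function
  set ρ : ℝ → ℝ := fun s => M * ‖f s‖ - ⟪F s, u s - x⟫ with hρ_def
  have hρ_pt : ∀ s, a ≤ s → θ s * ‖T (u s) - u s‖ ^ 2 ≤ 2 * ρ s ∧ 0 ≤ ρ s := by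
    intro s hs
    have h1 := qne_inner_bound hT hx (u s)
    have hθs := hθ s hs
    have h2 : ⟪f s, u s - x⟫ ≤ ‖f s‖ * M :=
      le_trans (real_inner_le_norm _ _)
        (mul_le_mul_of_nonneg_left (hM s hs) (norm_nonneg _))
    have hsplit : ⟪F s, u s - x⟫
        = θ s * ⟪T (u s) - u s, u s - x⟫ + ⟪f s, u s - x⟫ := by
      have hFs : F s = θ s • (T (u s) - u s) + f s := rfl
      rw [hFs, inner_add_left, real_inner_smul_left]
    have h3 : θ s * ⟪T (u s) - u s, u s - x⟫ ≤ θ s * (-(1/2) * ‖T (u s) - u s‖ ^ 2) :=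
      mul_le_mul_of_nonneg_left h1 hθs
    have h4 : 0 ≤ θ s * ‖T (u s) - u s‖ ^ 2 :=
      mul_nonneg hθs (sq_nonneg _)
    have hρs : ρ s = M * ‖f s‖ - ⟪F s, u s - x⟫ := rfl
    constructor
    · rw [hρs]; nlinarith
    · rw [hρs]; nlinarith
  have hρ_int : ∀ b, a ≤ b → IntegrableOn ρ (Ioc a b) := by
    intro b hb
    exact ((hfint.mono_set (fun y hy => hy.1.le)).const_mul M).sub (key_int b hb)
  set C : ℝ := M * B + ‖u₀ - x‖ ^ 2 / 2 with hC_def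
  have hρ_sum : ∀ b, a ≤ b → ∫ s in Ioc a b, ρ s ≤ C := by
    intro b hb
    have h1 : ∫ s in Ioc a b, ρ s
        = M * (∫ s in Ioc a b, ‖f s‖) - ∫ s in Ioc a b, ⟪F s, u s - x⟫ := by
      simp only [hρ_def]
      rw [integral_sub ((hfint.mono_set (fun y hy => hy.1.le)).const_mul M) (key_int b hb)]
      rw [integral_const_mul]
    have h2 : ∫ s in Ioc a b, ⟪F s, u s - x⟫ = (‖u b - x‖ ^ 2 - ‖u₀ - x‖ ^ 2) / 2 := by
      have := hstar b hb; linarith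
    have h3 := hBle b hb
    have h4 : 0 ≤ ‖u b - x‖ ^ 2 := sq_nonneg _
    have h5 : M * (∫ s in Ioc a b, ‖f s‖) ≤ M * B := mul_le_mul_of_nonneg_left h3 hM0
    rw [h1, h2, hC_def]
    nlinarith [h4, h5]
  have hlin : ∀ b, a ≤ b →
      ∫⁻ s in Ioc a b, ENNReal.ofReal (2 * ρ s) ≤ ENNReal.ofReal (2 * C) := by
    intro b hb
    have hnn : 0 ≤ᵐ[volume.restrict (Ioc a b)] fun s => 2 * ρ s := by
      filter_upwards [ae_restrict_mem measurableSet_Ioc] with s hs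
      show (0:ℝ) ≤ 2 * ρ s
      linarith [(hρ_pt s hs.1.le).2]
    rw [← ofReal_integral_eq_lintegral_ofReal ((hρ_int b hb).const_mul 2) hnn]
    apply ENNReal.ofReal_le_ofReal
    rw [integral_const_mul]
    linarith [hρ_sum b hb]
  -- measurability of ρ on Ici a
  have hIciU : Ici a = ⋃ n : ℕ, Icc a (a + n) := by
    ext y
    simp only [mem_Ici, mem_iUnion, mem_Icc]
    constructor
    · intro hy
      obtain ⟨n, hn⟩ := exists_nat_ge (y - a)
      exact ⟨n, hy, by linarith⟩
    · rintro ⟨n, hn, _⟩; exact hn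
  have hFasm : AEStronglyMeasurable F (volume.restrict (Ici a)) := by
    rw [hIciU]
    apply aestronglyMeasurable_iUnion_iff.mpr
    intro n
    rw [← Measure.restrict_congr_set Ioc_ae_eq_Icc]
    exact (hFI (a + n) (le_add_of_nonneg_right n.cast_nonneg)).aestronglyMeasurable
  have huasm : AEStronglyMeasurable (fun s => u s - x) (volume.restrict (Ici a)) := by
    rw [hIciU]
    apply aestronglyMeasurable_iUnion_iff.mpr
    intro n
    exact ((hucont (a + n)).aestronglyMeasurable measurableSet_Icc)
  have hρ_asm : AEStronglyMeasurable ρ (volume.restrict (Ici a)) := by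
    apply AEStronglyMeasurable.sub
    · exact (hfint.aestronglyMeasurable.const_mul M)
    · exact hFasm.inner huasm
  have hg_meas : AEMeasurable (fun s => ENNReal.ofReal (2 * ρ s))
      (volume.restrict (Ici a)) :=
    ENNReal.measurable_ofReal.comp_aemeasurable
      ((hρ_asm.aemeasurable).const_mul 2)
  -- pointwise bound over Ici a
  have hle : ∫⁻ s in Ici a, ENNReal.ofReal (θ s * ‖T (u s) - u s‖ ^ 2)
      ≤ ∫⁻ s in Ici a, ENNReal.ofReal (2 * ρ s) := by
    apply lintegral_mono_ae
    filter_upwards [ae_restrict_mem measurableSet_Ici] with s hs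
    exact ENNReal.ofReal_le_ofReal (hρ_pt s hs).1
  -- supremum argument
  have hfinal : ∫⁻ s in Ici a, ENNReal.ofReal (2 * ρ s) ≤ ENNReal.ofReal (2 * C) := by
    set ν := volume.restrict (Ici a) with hν
    set g : ℝ → ENNReal := fun s => ENNReal.ofReal (2 * ρ s) with hg
    set φ : ℕ → ℝ → ENNReal := fun n => (Iic (a + (n : ℝ))).indicator g with hφ
    have hφ_meas : ∀ n, AEMeasurable (φ n) ν := fun n =>
      hg_meas.indicator measurableSet_Iic
    have hφ_mono : ∀ s, Monotone fun n => φ n s := by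
      intro s n k hnk
      simp only [hφ]
      by_cases h : s ∈ Iic (a + (n : ℝ))
      · rw [Set.indicator_of_mem h]
        have h2 : s ∈ Iic (a + (k : ℝ)) := by
          simp only [mem_Iic] at h ⊢
          have : (n : ℝ) ≤ k := Nat.cast_le.mpr hnk
          linarith
        rw [Set.indicator_of_mem h2]
      · rw [Set.indicator_of_notMem h]
        exact zero_le
    have hφ_sup : ∀ s, ⨆ n, φ n s = g s := by
      intro s
      apply le_antisymm
      · apply iSup_le
        intro n
        simp only [hφ]
        exact Set.indicator_le_self _ _ s
      · obtain ⟨n, hn⟩ := exists_nat_ge (s - a)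
        have hmem : s ∈ Iic (a + (n : ℝ)) := by simp only [mem_Iic]; linarith
        calc g s = φ n s := by simp only [hφ]; rw [Set.indicator_of_mem hmem]
          _ ≤ ⨆ k, φ k s := le_iSup (fun k => φ k s) n
    calc ∫⁻ s, g s ∂ν = ∫⁻ s, ⨆ n, φ n s ∂ν := by
          apply lintegral_congr; intro s; exact (hφ_sup s).symm
      _ = ⨆ n, ∫⁻ s, φ n s ∂ν := lintegral_iSup' hφ_meas (ae_of_all _ hφ_mono)
      _ ≤ ENNReal.ofReal (2 * C) := by
          apply iSup_le
          intro n
          simp only [hφ]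
          rw [lintegral_indicator measurableSet_Iic, hν,
            Measure.restrict_restrict measurableSet_Iic]
          have h2 : Iic (a + (n : ℝ)) ∩ Ici a = Icc a (a + (n : ℝ)) := by
            rw [inter_comm, Ici_inter_Iic]
          rw [h2, ← Measure.restrict_congr_set Ioc_ae_eq_Icc]
          exact hlin (a + n) (le_add_of_nonneg_right n.cast_nonneg)
  exact lt_of_le_of_lt (hle.trans hfinal) ENNReal.ofReal_lt_top
end

section
/- Let T : H → H be a quasi-nonexpansive operator with Fix(T) ≠ ∅, and let u be a strong global solution of the evolution equation u'(t) = θ(t)(T(u(t)) − u(t)) + f(t), u(t₀) = u₀. Then for every u* ∈ Fix(T) and every t ≥ t₀ one has ‖u(t) − u*‖ ≤ ‖u₀ − u*‖ + ∫_{t₀}^{t} ‖f(s)‖ ds; in particular the trajectory u is bounded on [t₀,∞). -/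
open MeasureTheory Filter Set
open scoped RealInnerProductSpace

private lemma aux_sqrt (A B : ℝ) (hA : 0 < A) (hAB : 0 ≤ A ^ 2 + B) :
    Real.sqrt (A ^ 2 + B) ≤ A + B / (2 * A) := by
  have h2A : (0:ℝ) < 2 * A := by linarith
  have e : 2 * A * (B / (2 * A)) = B := mul_div_cancel₀ _ (ne_of_gt h2A)
  have key : A ^ 2 + B ≤ (A + B / (2 * A)) ^ 2 := by nlinarith [sq_nonneg (B / (2 * A))]
  have h1 : 0 ≤ A + B / (2 * A) := by nlinarith [e]
  calc Real.sqrt (A ^ 2 + B) ≤ Real.sqrt ((A + B / (2 * A)) ^ 2) := Real.sqrt_le_sqrt key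
    _ = A + B / (2 * A) := Real.sqrt_sq h1

private lemma aux_inner {H : Type*} [NormedAddCommGroup H] [InnerProductSpace ℝ H]
    {T : H → H} (hT : ∀ (y x : H), T x = x → ‖T y - x‖ ≤ ‖y - x‖)
    {p : H} (hp : T p = p) (x : H) : ⟪x - p, T x - x⟫ ≤ 0 := by
  have h1 := hT x p hp
  have h2 := real_inner_le_norm (x - p) (T x - p)
  have e : ⟪x - p, T x - x⟫ = ⟪x - p, T x - p⟫ - ‖x - p‖ ^ 2 := by
    rw [show T x - x = (T x - p) - (x - p) by abel, inner_sub_right,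
      real_inner_self_eq_norm_sq]
  nlinarith [norm_nonneg (x - p), norm_nonneg (T x - p)]

set_option maxHeartbeats 1600000 in
theorem stmt_1
    {H : Type*} [NormedAddCommGroup H] [InnerProductSpace ℝ H] [CompleteSpace H]
    (T : H → H)
    (hT : ∀ (y x : H), T x = x → ‖T y - x‖ ≤ ‖y - x‖)
    (hfix : ∃ x : H, T x = x)
    (t₀ : ℝ) (ht₀ : 0 < t₀)
    (θ : ℝ → ℝ) (hθ : ∀ t, t₀ ≤ t → 0 ≤ θ t)
    (hθint : ∀ b : ℝ, IntervalIntegrable θ volume t₀ b)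
    (f : ℝ → H)
    (hfint : IntegrableOn (fun s => ‖f s‖) (Set.Ici t₀))
    (u : ℝ → H) (u₀ : H)
    (huint : ∀ t, t₀ ≤ t →
      IntervalIntegrable (fun s => θ s • (T (u s) - u s) + f s) volume t₀ t)
    (husol : ∀ t, t₀ ≤ t →
      u t = u₀ + ∫ s in t₀..t, (θ s • (T (u s) - u s) + f s)) :
    ∀ ustar : H, T ustar = ustar → ∀ t, t₀ ≤ t →
      ‖u t - ustar‖ ≤ ‖u₀ - ustar‖ + ∫ s in t₀..t, ‖f s‖ := by
  intro ustar hstar b hb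
  set g : ℝ → H := fun s => θ s • (T (u s) - u s) + f s with hgdef
  -- basic interval integrability facts
  have hθI : ∀ x y, t₀ ≤ x → x ≤ y → y ≤ b → IntervalIntegrable θ volume x y := by
    intro x y hx hxy hy
    exact (hθint b).mono_set
      (by rw [uIcc_of_le hxy, uIcc_of_le hb]; exact Icc_subset_Icc hx hy)
  have hfI : ∀ x y, t₀ ≤ x → x ≤ y → y ≤ b →
      IntervalIntegrable (fun s => ‖f s‖) volume x y := by
    intro x y hx hxy _
    rw [intervalIntegrable_iff_integrableOn_Ioc_of_le hxy]
    exact hfint.mono_set (fun r hr => hx.trans hr.1.le)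
  have hgI : ∀ x y, t₀ ≤ x → x ≤ y → y ≤ b → IntervalIntegrable g volume x y := by
    intro x y hx hxy hy
    exact (huint b hb).mono_set
      (by rw [uIcc_of_le hxy, uIcc_of_le hb]; exact Icc_subset_Icc hx hy)
  -- continuity of u on [t₀, b]
  have hu : ∀ x ∈ Icc t₀ b, u x = u₀ + ∫ s in t₀..x, g s := fun x hx => husol x hx.1
  have hucont : ContinuousOn u (Icc t₀ b) := by
    have h1 : ContinuousOn (fun x => ∫ s in t₀..x, g s) (Icc t₀ b) := by
      have h2 := intervalIntegral.continuousOn_primitive_interval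
        (f := g) (μ := volume) (a := t₀) (b := b)
        (by rw [uIcc_of_le hb]
            exact (intervalIntegrable_iff_integrableOn_Icc_of_le hb).mp (huint b hb))
      rwa [uIcc_of_le hb] at h2
    exact (continuousOn_const.add h1).congr hu
  -- the bound M on the trajectory
  obtain ⟨r₀, hr₀, hMax⟩ := isCompact_Icc.exists_isMaxOn (nonempty_Icc.mpr hb)
    ((hucont.sub continuousOn_const).norm)
  set M := ‖u r₀ - ustar‖ with hMdef
  have hM : ∀ s ∈ Icc t₀ b, ‖u s - ustar‖ ≤ M := fun s hs => hMax hs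
  have hM0 : 0 ≤ M := (norm_nonneg (u t₀ - ustar)).trans (hM t₀ (left_mem_Icc.mpr hb))
  have hTb : ∀ s ∈ Icc t₀ b, ‖T (u s) - u s‖ ≤ 2 * M := by
    intro s hs
    have h1 := hT (u s) ustar hstar
    have h2 := hM s hs
    rw [show T (u s) - u s = (T (u s) - ustar) - (u s - ustar) by abel]
    calc ‖(T (u s) - ustar) - (u s - ustar)‖
        ≤ ‖T (u s) - ustar‖ + ‖u s - ustar‖ := norm_sub_le _ _
      _ ≤ 2 * M := by linarith
  have hgnorm : ∀ s ∈ Icc t₀ b, ‖g s‖ ≤ 2 * M * θ s + ‖f s‖ := by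
    intro s hs
    have h1 : ‖θ s • (T (u s) - u s)‖ = θ s * ‖T (u s) - u s‖ := by
      rw [norm_smul, Real.norm_eq_abs, abs_of_nonneg (hθ s hs.1)]
    have h2 := hTb s hs
    have h3 := hθ s hs.1
    calc ‖g s‖ ≤ ‖θ s • (T (u s) - u s)‖ + ‖f s‖ := norm_add_le _ _
      _ ≤ 2 * M * θ s + ‖f s‖ := by rw [h1]; nlinarith
  -- primitives
  set F : ℝ → ℝ := fun x => ∫ s in t₀..x, ‖f s‖ with hFdef
  set Θ : ℝ → ℝ := fun x => ∫ s in t₀..x, θ s with hΘdef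
  set G : ℝ → ℝ := fun x => ∫ s in t₀..x, (2 * M * θ s + ‖f s‖) with hGdefn
  have hGI : ∀ x y, t₀ ≤ x → x ≤ y → y ≤ b →
      IntervalIntegrable (fun s => 2 * M * θ s + ‖f s‖) volume x y :=
    fun x y hx hxy hy => ((hθI x y hx hxy hy).const_mul _).add (hfI x y hx hxy hy)
  have hFd : ∀ x y, t₀ ≤ x → x ≤ y → y ≤ b → F y - F x = ∫ s in x..y, ‖f s‖ :=
    fun x y hx hxy hy => intervalIntegral.integral_interval_sub_left
      (hfI t₀ y le_rfl (hx.trans hxy) hy) (hfI t₀ x le_rfl hx (hxy.trans hy))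
  have hΘd : ∀ x y, t₀ ≤ x → x ≤ y → y ≤ b → Θ y - Θ x = ∫ s in x..y, θ s :=
    fun x y hx hxy hy => intervalIntegral.integral_interval_sub_left
      (hθI t₀ y le_rfl (hx.trans hxy) hy) (hθI t₀ x le_rfl hx (hxy.trans hy))
  have hGd : ∀ x y, t₀ ≤ x → x ≤ y → y ≤ b →
      G y - G x = ∫ s in x..y, (2 * M * θ s + ‖f s‖) :=
    fun x y hx hxy hy => intervalIntegral.integral_interval_sub_left
      (hGI t₀ y le_rfl (hx.trans hxy) hy) (hGI t₀ x le_rfl hx (hxy.trans hy))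
  have hFd' : ∀ x y, t₀ ≤ x → x ≤ y → y ≤ b → 0 ≤ F y - F x := by
    intro x y hx hxy hy
    rw [hFd x y hx hxy hy]
    exact intervalIntegral.integral_nonneg hxy (fun s _ => norm_nonneg _)
  have hΘd' : ∀ x y, t₀ ≤ x → x ≤ y → y ≤ b → 0 ≤ Θ y - Θ x := by
    intro x y hx hxy hy
    rw [hΘd x y hx hxy hy]
    exact intervalIntegral.integral_nonneg hxy (fun s hs => hθ s (hx.trans hs.1))
  have hGd' : ∀ x y, t₀ ≤ x → x ≤ y → y ≤ b → 0 ≤ G y - G x := by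
    intro x y hx hxy hy
    rw [hGd x y hx hxy hy]
    refine intervalIntegral.integral_nonneg hxy (fun s hs => ?_)
    have := hθ s (hx.trans hs.1)
    have := norm_nonneg (f s)
    nlinarith
  have hGcont : ContinuousOn G (Icc t₀ b) := by
    have h2 := intervalIntegral.continuousOn_primitive_interval
      (f := fun s => 2 * M * θ s + ‖f s‖) (μ := volume) (a := t₀) (b := b)
      (by rw [uIcc_of_le hb]
          exact (intervalIntegrable_iff_integrableOn_Icc_of_le hb).mp
            (hGI t₀ b le_rfl hb le_rfl))
    rwa [uIcc_of_le hb] at h2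
  have hud : ∀ x y, t₀ ≤ x → x ≤ y → y ≤ b → u y - u x = ∫ s in x..y, g s := by
    intro x y hx hxy hy
    rw [hu y ⟨hx.trans hxy, hy⟩, hu x ⟨hx, hxy.trans hy⟩, add_sub_add_left_eq_sub]
    exact intervalIntegral.integral_interval_sub_left
      (hgI t₀ y le_rfl (hx.trans hxy) hy) (hgI t₀ x le_rfl hx (hxy.trans hy))
  -- main ε-estimate
  have hmain : ∀ ε : ℝ, 0 < ε →
      ‖u b - ustar‖ ≤ ‖u₀ - ustar‖ + F b + ε * (1 + Θ b + F b) := by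
    intro ε hε
    set w : ℝ → ℝ := fun x => Real.sqrt (‖u x - ustar‖ ^ 2 + ε ^ 2) with hwdef
    have hwsq : ∀ x, w x ^ 2 = ‖u x - ustar‖ ^ 2 + ε ^ 2 := fun x =>
      Real.sq_sqrt (by positivity)
    have hwpos : ∀ x, ε ≤ w x := by
      intro x
      have h1 : ε ^ 2 ≤ ‖u x - ustar‖ ^ 2 + ε ^ 2 :=
        le_add_of_nonneg_left (sq_nonneg _)
      have h2 := Real.sqrt_le_sqrt h1
      rwa [Real.sqrt_sq hε.le] at h2
    have hwc : ∀ x, ‖u x - ustar‖ ≤ w x := by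
      intro x
      have h1 : ‖u x - ustar‖ ^ 2 ≤ ‖u x - ustar‖ ^ 2 + ε ^ 2 :=
        le_add_of_nonneg_right (sq_nonneg _)
      have h2 := Real.sqrt_le_sqrt h1
      rwa [Real.sqrt_sq (norm_nonneg _)] at h2
    set φ : ℝ → ℝ := fun x => w x - F x - ε * (Θ x + F x) with hφdef
    set ρ : ℝ := ε ^ 2 / (3 * M + 1) with hρdef
    have hρ : 0 < ρ := div_pos (by positivity) (by linarith)
    -- one-step estimate
    have hstep : ∀ a t, t₀ ≤ a → a ≤ t → t ≤ b → G t - G a ≤ ρ → φ t ≤ φ a := by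
      intro a t ha hat htb hη
      have hta : t₀ ≤ t := ha.trans hat
      have hab' : a ≤ b := hat.trans htb
      have hδ : ∀ s ∈ Icc a t, ‖u s - u a‖ ≤ G t - G a := by
        intro s hs
        have hs0 : t₀ ≤ s := ha.trans hs.1
        have hsb : s ≤ b := hs.2.trans htb
        rw [hud a s ha hs.1 hsb]
        calc ‖∫ r in a..s, g r‖ ≤ ∫ r in a..s, ‖g r‖ :=
              intervalIntegral.norm_integral_le_integral_norm hs.1
          _ ≤ ∫ r in a..s, (2 * M * θ r + ‖f r‖) := by
              apply intervalIntegral.integral_mono_on hs.1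
                ((hgI a s ha hs.1 hsb).norm) (hGI a s ha hs.1 hsb)
              intro r hr
              exact hgnorm r ⟨ha.trans hr.1, hr.2.trans hsb⟩
          _ = G s - G a := (hGd a s ha hs.1 hsb).symm
          _ ≤ G t - G a := by have := hGd' s t hs0 hs.2 htb; linarith
      have hvd : u t - u a = ∫ s in a..t, g s := hud a t ha hat htb
      set cv : H := u a - ustar with hcv
      set v : H := ∫ s in a..t, g s with hv
      have hvn : ‖v‖ ≤ G t - G a := by
        rw [← hvd]; exact hδ t ⟨hat, le_rfl⟩
      have hcvw : ‖cv‖ ≤ w a := hwc a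
      have hεwa : ε ≤ w a := hwpos a
      have hη0 : 0 ≤ G t - G a := hGd' a t ha hat htb
      have hΘa := hΘd' a t ha hat htb
      have hFa := hFd' a t ha hat htb
      have hηeq : G t - G a = 2 * M * (Θ t - Θ a) + (F t - F a) := by
        rw [hGd a t ha hat htb,
          intervalIntegral.integral_add ((hθI a t ha hat htb).const_mul (2 * M))
            (hfI a t ha hat htb),
          intervalIntegral.integral_const_mul, hΘd a t ha hat htb, hFd a t ha hat htb]
      have hinner : ⟪cv, v⟫ ≤ 2 * M * (G t - G a) * (Θ t - Θ a) + (F t - F a) * ‖cv‖ := by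
        have hcomp := (innerSL ℝ cv).intervalIntegral_comp_comm (hgI a t ha hat htb)
        have hrw : ⟪cv, v⟫ = ∫ s in a..t, (innerSL ℝ cv) (g s) := by
          rw [hcomp, hv, innerSL_apply_apply]
        rw [hrw]
        have hint1 : IntervalIntegrable (fun s => (innerSL ℝ cv) (g s)) volume a t := by
          have h := hgI a t ha hat htb
          rw [intervalIntegrable_iff] at h ⊢
          exact (innerSL ℝ cv).integrable_comp h
        have hint2 : IntervalIntegrable
            (fun s => 2 * M * (G t - G a) * θ s + ‖f s‖ * ‖cv‖) volume a t :=
          ((hθI a t ha hat htb).const_mul _).add ((hfI a t ha hat htb).mul_const _)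
        calc (∫ s in a..t, (innerSL ℝ cv) (g s))
            ≤ ∫ s in a..t, (2 * M * (G t - G a) * θ s + ‖f s‖ * ‖cv‖) := by
              apply intervalIntegral.integral_mono_on hat hint1 hint2
              intro s hs
              have hs0 : t₀ ≤ s := ha.trans hs.1
              have hsb : s ≤ b := hs.2.trans htb
              have e1 : (innerSL ℝ cv) (g s) = θ s * ⟪cv, T (u s) - u s⟫ + ⟪cv, f s⟫ := by
                rw [innerSL_apply_apply, hgdef]
                simp only [inner_add_right, real_inner_smul_right]
              have e2 : ⟪cv, T (u s) - u s⟫ ≤ 2 * M * (G t - G a) := by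
                have eq1 : cv = (u a - u s) + (u s - ustar) := by rw [hcv]; abel
                rw [eq1, inner_add_left]
                have h1 := aux_inner hT hstar (u s)
                have h2 := real_inner_le_norm (u a - u s) (T (u s) - u s)
                have h3 : ‖u a - u s‖ ≤ G t - G a := by
                  rw [norm_sub_rev]; exact hδ s hs
                have h4 := hTb s ⟨hs0, hsb⟩
                have h5 : ‖u a - u s‖ * ‖T (u s) - u s‖ ≤ (G t - G a) * (2 * M) :=
                  mul_le_mul h3 h4 (norm_nonneg _) hη0
                nlinarith
              have e3 : ⟪cv, f s⟫ ≤ ‖cv‖ * ‖f s‖ := real_inner_le_norm _ _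
              have hθs := hθ s hs0
              rw [e1]
              have h6 := mul_le_mul_of_nonneg_left e2 hθs
              nlinarith
          _ = 2 * M * (G t - G a) * (Θ t - Θ a) + (F t - F a) * ‖cv‖ := by
              rw [intervalIntegral.integral_add ((hθI a t ha hat htb).const_mul _)
                  ((hfI a t ha hat htb).mul_const _),
                intervalIntegral.integral_const_mul, intervalIntegral.integral_mul_const,
                hΘd a t ha hat htb, hFd a t ha hat htb]
      -- numeric endgame
      have hwt : w t ≤ w a + (2 * ⟪cv, v⟫ + ‖v‖ ^ 2) / (2 * w a) := by
        have hB : w a ^ 2 + (2 * ⟪cv, v⟫ + ‖v‖ ^ 2) = ‖u t - ustar‖ ^ 2 + ε ^ 2 := by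
          have hsum : u t - ustar = cv + v := by rw [← hvd, hcv]; abel
          rw [hsum, hwsq a, norm_add_sq_real]
          ring
        have h0 : 0 ≤ w a ^ 2 + (2 * ⟪cv, v⟫ + ‖v‖ ^ 2) := by rw [hB]; positivity
        have haux := aux_sqrt (w a) (2 * ⟪cv, v⟫ + ‖v‖ ^ 2)
          (lt_of_lt_of_le hε hεwa) h0
        rw [hB] at haux
        exact haux
      have hρ' : (G t - G a) * (3 * M + 1) ≤ ε ^ 2 := by
        rw [hρdef] at hη
        have h3 : (0:ℝ) < 3 * M + 1 := by linarith
        calc (G t - G a) * (3 * M + 1) ≤ ε ^ 2 / (3 * M + 1) * (3 * M + 1) :=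
              mul_le_mul_of_nonneg_right hη h3.le
          _ = ε ^ 2 := div_mul_cancel₀ _ (ne_of_gt h3)
      have hdiv : (2 * ⟪cv, v⟫ + ‖v‖ ^ 2) / (2 * w a) ≤
          (F t - F a) + ε * ((Θ t - Θ a) + (F t - F a)) := by
        rw [div_le_iff₀ (by linarith : (0:ℝ) < 2 * w a)]
        have k1 : 2 * ⟪cv, v⟫ ≤
            4 * M * (G t - G a) * (Θ t - Θ a) + 2 * (F t - F a) * w a := by
          nlinarith [hinner, hcvw, hFa]
        have k2 : ‖v‖ ^ 2 ≤ (G t - G a) ^ 2 := by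
          nlinarith [hvn, norm_nonneg v]
        have k3 : 4 * M * (G t - G a) * (Θ t - Θ a) + (G t - G a) ^ 2 ≤
            2 * ε ^ 2 * ((Θ t - Θ a) + (F t - F a)) := by
          nlinarith [mul_le_mul_of_nonneg_right hρ'
              (by linarith : (0:ℝ) ≤ 2 * ((Θ t - Θ a) + (F t - F a))),
            mul_nonneg (mul_nonneg hη0 hM0) hFa,
            mul_nonneg (mul_nonneg hη0 hM0) hΘa,
            mul_nonneg hη0 hΘa, mul_nonneg hη0 hFa, hηeq, hη0, hM0]
        have k4 : 2 * ε ^ 2 * ((Θ t - Θ a) + (F t - F a)) ≤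
            2 * ε * w a * ((Θ t - Θ a) + (F t - F a)) := by
          nlinarith [mul_nonneg (mul_nonneg hε.le (sub_nonneg.mpr hεwa))
            (by linarith : (0:ℝ) ≤ (Θ t - Θ a) + (F t - F a))]
        nlinarith [k1, k2, k3, k4]
      have hwfin : w t ≤ w a + ((F t - F a) + ε * ((Θ t - Θ a) + (F t - F a))) := by
        linarith [hwt, hdiv]
      simp only [hφdef]
      linarith [hwfin]
    -- continuous induction
    set A : Set ℝ := {x | x ∈ Icc t₀ b ∧ ∀ r ∈ Icc t₀ x, φ r ≤ φ t₀} with hAdef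
    have hA0 : t₀ ∈ A := by
      refine ⟨left_mem_Icc.mpr hb, fun r hr => ?_⟩
      have : r = t₀ := le_antisymm hr.2 hr.1
      rw [this]
    have hAb : ∀ x ∈ A, x ≤ b := fun x hx => hx.1.2
    have hbdd : BddAbove A := ⟨b, fun x hx => hAb x hx⟩
    set c := sSup A with hcdef
    have hc1 : t₀ ≤ c := le_csSup hbdd hA0
    have hc2 : c ≤ b := csSup_le ⟨t₀, hA0⟩ hAb
    have hlt : ∀ r, t₀ ≤ r → r < c → φ r ≤ φ t₀ := by
      intro r hr hrc
      obtain ⟨x, hxA, hrx⟩ := exists_lt_of_lt_csSup ⟨t₀, hA0⟩ hrc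
      exact hxA.2 r ⟨hr, hrx.le⟩
    have hφc : φ c ≤ φ t₀ := by
      rcases eq_or_lt_of_le hc1 with he | hlt'
      · rw [← he]
      · have hGc : ContinuousWithinAt G (Icc t₀ b) c := hGcont c ⟨hc1, hc2⟩
        rw [Metric.continuousWithinAt_iff] at hGc
        obtain ⟨δ, hδ0, hδc⟩ := hGc ρ hρ
        set a := max t₀ (c - δ / 2) with hadef
        have ha1 : t₀ ≤ a := le_max_left _ _
        have ha2 : a < c := max_lt hlt' (by linarith)
        have ha3 : a ∈ Icc t₀ b := ⟨ha1, ha2.le.trans hc2⟩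
        have hdist : dist a c < δ := by
          rw [Real.dist_eq, abs_of_nonpos (by linarith [ha2.le] : a - c ≤ 0)]
          have h8 : c - δ / 2 ≤ a := le_max_right _ _
          linarith
        have hGac : G c - G a ≤ ρ := by
          have h9 := hδc ha3 hdist
          rw [Real.dist_eq] at h9
          have h10 := abs_lt.mp h9
          linarith [h10.1, h10.2]
        exact (hstep a c ha1 ha2.le hc2 hGac).trans (hlt a ha1 ha2)
    have hcA : c ∈ A := by
      refine ⟨⟨hc1, hc2⟩, fun r hr => ?_⟩
      rcases lt_or_eq_of_le hr.2 with h | h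
      · exact hlt r hr.1 h
      · rw [h]; exact hφc
    have hcb : c = b := by
      by_contra hne
      have hclt : c < b := lt_of_le_of_ne hc2 hne
      have hGc : ContinuousWithinAt G (Icc t₀ b) c := hGcont c ⟨hc1, hc2⟩
      rw [Metric.continuousWithinAt_iff] at hGc
      obtain ⟨δ, hδ0, hδc⟩ := hGc ρ hρ
      set t' := min b (c + δ / 2) with ht'def
      have ht1 : c < t' := lt_min hclt (by linarith)
      have ht2 : t' ≤ b := min_le_left _ _
      have ht3 : t' ∈ Icc t₀ b := ⟨hc1.trans ht1.le, ht2⟩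
      have hGt' : G t' - G c ≤ ρ := by
        have hd : dist t' c < δ := by
          rw [Real.dist_eq, abs_of_nonneg (by linarith [ht1.le] : (0:ℝ) ≤ t' - c)]
          have h8 : t' ≤ c + δ / 2 := min_le_right _ _
          linarith
        have h9 := hδc ht3 hd
        rw [Real.dist_eq] at h9
        have h10 := abs_lt.mp h9
        linarith [h10.1, h10.2]
      have ht'A : t' ∈ A := by
        refine ⟨ht3, fun r hr => ?_⟩
        rcases le_or_gt r c with h | h
        · exact hcA.2 r ⟨hr.1, h⟩
        · have hGr : G r - G c ≤ ρ := by
            have h11 := hGd' r t' (hc1.trans h.le) hr.2 ht2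
            linarith
          exact (hstep c r hc1 h.le (hr.2.trans ht2) hGr).trans hφc
      have h12 := le_csSup hbdd ht'A
      rw [← hcdef] at h12
      linarith
    have hφb : φ b ≤ φ t₀ := by
      have := hcA.2 b
      rw [hcb] at this
      exact this ⟨hb, le_rfl⟩
    have hFt₀ : F t₀ = 0 := intervalIntegral.integral_same
    have hΘt₀ : Θ t₀ = 0 := intervalIntegral.integral_same
    have hu0 : u t₀ = u₀ := by
      rw [husol t₀ le_rfl, intervalIntegral.integral_same, add_zero]
    have hwt₀ : w t₀ ≤ ‖u₀ - ustar‖ + ε := by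
      have h1 : ‖u t₀ - ustar‖ ^ 2 + ε ^ 2 ≤ (‖u₀ - ustar‖ + ε) ^ 2 := by
        rw [hu0]; nlinarith [norm_nonneg (u₀ - ustar), hε]
      calc w t₀ ≤ Real.sqrt ((‖u₀ - ustar‖ + ε) ^ 2) := Real.sqrt_le_sqrt h1
        _ = ‖u₀ - ustar‖ + ε := Real.sqrt_sq (by positivity)
    have hwb := hwc b
    simp only [hφdef, hFt₀, hΘt₀] at hφb
    linarith
  -- take ε → 0
  have hΘb : 0 ≤ Θ b := by
    have h1 := hΘd' t₀ b le_rfl hb le_rfl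
    have h2 : Θ t₀ = 0 := intervalIntegral.integral_same
    linarith
  have hFb : 0 ≤ F b := by
    have h1 := hFd' t₀ b le_rfl hb le_rfl
    have h2 : F t₀ = 0 := intervalIntegral.integral_same
    linarith
  have hgoal : ‖u b - ustar‖ ≤ ‖u₀ - ustar‖ + F b := by
    by_contra hcon
    push_neg at hcon
    set d := ‖u b - ustar‖ - (‖u₀ - ustar‖ + F b) with hddef
    have hd0 : 0 < d := by simp only [hddef]; linarith
    have hK : (0:ℝ) < 1 + Θ b + F b := by linarith
    have h1 := hmain (d / (2 * (1 + Θ b + F b))) (by positivity)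
    have he : d / (2 * (1 + Θ b + F b)) * (1 + Θ b + F b) = d / 2 := by
      field_simp
    linarith
  exact hgoal
end

section
/- Let T : H → H be a quasi-nonexpansive operator with Fix(T) ≠ ∅, and let u be a strong global solution of the evolution equation u'(t) = θ(t)(T(u(t)) − u(t)) + f(t), u(t₀) = u₀. If T is uniformly continuous on H and inf_{t ≥ t₀} θ(t) > 0, then lim_{t→∞} ‖T(u(t)) − u(t)‖ = 0. -/
open MeasureTheory Filter Set
open scoped RealInnerProductSpace

lemma sq_norm_sub_sq_norm {H : Type*} [NormedAddCommGroup H] [InnerProductSpace ℝ H]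
    (x y : H) : ‖x‖ ^ 2 - ‖y‖ ^ 2 = ⟪x - y, x + y⟫ := by
  rw [inner_sub_left, inner_add_right, inner_add_right,
    real_inner_self_eq_norm_sq, real_inner_self_eq_norm_sq, real_inner_comm y x]
  ring

lemma inner_integrableOn {H : Type*} [NormedAddCommGroup H] [InnerProductSpace ℝ H]
    {G v : ℝ → H} {a b : ℝ} (hab : a ≤ b)
    (hG : IntervalIntegrable G volume a b)
    (hv : ContinuousOn v (Icc a b)) :
    IntervalIntegrable (fun s => ⟪G s, v s⟫) volume a b := by
  obtain ⟨M, hM⟩ := isCompact_Icc.exists_bound_of_continuousOn hv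
  rw [intervalIntegrable_iff_integrableOn_Ioc_of_le hab] at hG ⊢
  have hmeas : AEStronglyMeasurable (fun s => ⟪G s, v s⟫)
      (volume.restrict (Ioc a b)) :=
    hG.aestronglyMeasurable.inner
      ((hv.mono Ioc_subset_Icc_self).aestronglyMeasurable measurableSet_Ioc)
  refine Integrable.mono' (hG.norm.mul_const M) hmeas ?_
  filter_upwards [ae_restrict_mem measurableSet_Ioc] with s hs
  calc ‖⟪G s, v s⟫‖ ≤ ‖G s‖ * ‖v s‖ := by
        rw [Real.norm_eq_abs]; exact abs_real_inner_le_norm _ _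
    _ ≤ ‖G s‖ * M := by
        have h1 := hM s (Ioc_subset_Icc_self hs)
        exact mul_le_mul_of_nonneg_left h1 (norm_nonneg _)

/-- Chain-rule identity for `‖v‖²` where `v` is an indefinite integral of `G`. -/
lemma key_ident {H : Type*} [NormedAddCommGroup H] [InnerProductSpace ℝ H] [CompleteSpace H]
    {G v : ℝ → H} {a b : ℝ} (hab : a ≤ b)
    (hG : IntervalIntegrable G volume a b)
    (hv : ContinuousOn v (Icc a b))
    (hsub : ∀ s t, a ≤ s → s ≤ t → t ≤ b → v t - v s = ∫ r in s..t, G r) :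
    ‖v b‖ ^ 2 = ‖v a‖ ^ 2 + ∫ s in a..b, 2 * ⟪G s, v s⟫ := by
  have hFint : IntervalIntegrable (fun s => 2 * ⟪G s, v s⟫) volume a b :=
    (inner_integrableOn hab hG hv).const_mul 2
  set D : ℝ := ‖v b‖ ^ 2 - ‖v a‖ ^ 2 - ∫ s in a..b, 2 * ⟪G s, v s⟫ with hD
  suffices hsf : ∀ δ : ℝ, 0 < δ → |D| ≤ δ by
    have h0 : |D| ≤ 0 := by
      by_contra hcon
      push_neg at hcon
      exact absurd (hsf (|D| / 2) (by linarith)) (by linarith)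
    have hD0 : D = 0 := abs_nonpos_iff.mp h0
    rw [hD] at hD0; linarith
  intro δ hδ
  set K : ℝ := ∫ s in a..b, ‖G s‖ with hK
  have hK0 : 0 ≤ K := intervalIntegral.integral_nonneg hab (fun s _ => norm_nonneg _)
  set ρ : ℝ := δ / (2 * K + 2) with hρdef
  have hρ : 0 < ρ := by positivity
  have hvu := isCompact_Icc.uniformContinuousOn_of_continuous hv
  rw [Metric.uniformContinuousOn_iff] at hvu
  obtain ⟨r, hr, hrP⟩ := hvu ρ hρ
  obtain ⟨n, hn⟩ := exists_nat_gt ((b - a) / r)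
  have hnpos : (0:ℝ) < (n:ℝ) + 1 := by positivity
  have hmesh : (b - a) / ((n:ℝ) + 1) < r := by
    rw [div_lt_iff₀ hnpos]
    have h1 : (b - a) / r < (n:ℝ) + 1 := hn.trans (lt_add_one _)
    rw [div_lt_iff₀ hr] at h1
    linarith
  have hmesh0 : 0 ≤ (b - a) / ((n:ℝ) + 1) := div_nonneg (by linarith) hnpos.le
  set t : ℕ → ℝ := fun i => a + (b - a) * i / ((n:ℝ) + 1) with ht
  have ht_zero : t 0 = a := by simp [ht]
  have ht_last : t (n + 1) = b := by
    simp only [ht]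
    push_cast
    field_simp
    ring
  have ht_mono : ∀ i j : ℕ, i ≤ j → t i ≤ t j := by
    intro i j hij
    simp only [ht]
    have hcast : (i:ℝ) ≤ (j:ℝ) := Nat.cast_le.mpr hij
    have hba : 0 ≤ b - a := by linarith
    gcongr
  have ht_mem : ∀ i, i ≤ n + 1 → t i ∈ Icc a b := by
    intro i hi
    constructor
    · rw [← ht_zero]; exact ht_mono 0 i (Nat.zero_le _)
    · rw [← ht_last]; exact ht_mono i (n+1) hi
  have ht_diff : ∀ i : ℕ, t (i + 1) - t i = (b - a) / ((n:ℝ) + 1) := by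
    intro i
    simp only [ht]
    push_cast
    field_simp
    ring
  have hsubI : ∀ i, i < n + 1 → uIcc (t i) (t (i+1)) ⊆ uIcc a b := by
    intro i hi
    rw [uIcc_of_le (ht_mono i (i+1) (Nat.le_succ _)), uIcc_of_le hab]
    exact Icc_subset_Icc (ht_mem i (le_of_lt hi)).1 (ht_mem (i+1) hi).2
  have hGi : ∀ i, i < n + 1 → IntervalIntegrable G volume (t i) (t (i+1)) :=
    fun i hi => hG.mono_set (hsubI i hi)
  have hFi : ∀ i, i < n + 1 →
      IntervalIntegrable (fun s => 2 * ⟪G s, v s⟫) volume (t i) (t (i+1)) :=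
    fun i hi => hFint.mono_set (hsubI i hi)
  have tele : ‖v b‖ ^ 2 - ‖v a‖ ^ 2
      = ∑ i ∈ Finset.range (n+1), (‖v (t (i+1))‖ ^ 2 - ‖v (t i)‖ ^ 2) := by
    rw [Finset.sum_range_sub (fun i => ‖v (t i)‖ ^ 2), ht_zero, ht_last]
  have hterm : ∀ i, i < n + 1 → ‖v (t (i+1))‖ ^ 2 - ‖v (t i)‖ ^ 2
      = ∫ s in t i..t (i+1), ⟪v (t (i+1)) + v (t i), G s⟫ := by
    intro i hi
    have hle := ht_mono i (i+1) (Nat.le_succ _)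
    have h1 : v (t (i+1)) - v (t i) = ∫ r in t i..t (i+1), G r :=
      hsub _ _ (ht_mem i (le_of_lt hi)).1 hle (ht_mem (i+1) hi).2
    calc ‖v (t (i+1))‖ ^ 2 - ‖v (t i)‖ ^ 2
        = ⟪v (t (i+1)) - v (t i), v (t (i+1)) + v (t i)⟫ := sq_norm_sub_sq_norm _ _
      _ = ⟪v (t (i+1)) + v (t i), v (t (i+1)) - v (t i)⟫ := real_inner_comm _ _
      _ = ⟪v (t (i+1)) + v (t i), ∫ r in Ioc (t i) (t (i+1)), G r⟫ := by
          rw [h1, intervalIntegral.integral_of_le hle]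
      _ = ∫ s in Ioc (t i) (t (i+1)), ⟪v (t (i+1)) + v (t i), G s⟫ :=
          (integral_inner ((intervalIntegrable_iff_integrableOn_Ioc_of_le hle).mp
            (hGi i hi)) _).symm
      _ = ∫ s in t i..t (i+1), ⟪v (t (i+1)) + v (t i), G s⟫ :=
          (intervalIntegral.integral_of_le hle).symm
  have hsplit : (∫ s in a..b, 2 * ⟪G s, v s⟫)
      = ∑ i ∈ Finset.range (n+1), ∫ s in t i..t (i+1), 2 * ⟪G s, v s⟫ := by
    rw [intervalIntegral.sum_integral_adjacent_intervals (fun i hi => hFi i hi),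
      ht_zero, ht_last]
  have hDsum : D = ∑ i ∈ Finset.range (n+1),
      ∫ s in t i..t (i+1), ⟪v (t (i+1)) + v (t i) - (2:ℝ) • v s, G s⟫ := by
    rw [hD, hsplit, tele, ← Finset.sum_sub_distrib]
    refine Finset.sum_congr rfl ?_
    intro i hi
    rw [Finset.mem_range] at hi
    have hle := ht_mono i (i+1) (Nat.le_succ _)
    have hci : IntervalIntegrable (fun s => ⟪v (t (i+1)) + v (t i), G s⟫)
        volume (t i) (t (i+1)) :=
      (intervalIntegrable_iff_integrableOn_Ioc_of_le hle).mpr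
        (((intervalIntegrable_iff_integrableOn_Ioc_of_le hle).mp (hGi i hi)).const_inner _)
    rw [hterm i hi, ← intervalIntegral.integral_sub hci (hFi i hi)]
    congr 1; ext s
    rw [inner_sub_left, real_inner_smul_left]
    have hcm : ⟪v s, G s⟫ = ⟪G s, v s⟫ := real_inner_comm _ _
    rw [hcm]; try ring
  -- per-term estimate
  have hbound : ∀ i, i < n + 1 →
      |∫ s in t i..t (i+1), ⟪v (t (i+1)) + v (t i) - (2:ℝ) • v s, G s⟫|
        ≤ ∫ s in t i..t (i+1), 2 * ρ * ‖G s‖ := by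
    intro i hi
    have hle := ht_mono i (i+1) (Nat.le_succ _)
    rw [← Real.norm_eq_abs]
    refine le_trans (intervalIntegral.norm_integral_le_abs_of_norm_le ?_
      ((hG.norm.const_mul (2 * ρ)).mono_set (hsubI i hi)))
      (le_of_eq (abs_of_nonneg (intervalIntegral.integral_nonneg hle
        (fun s _ => by positivity))))
    filter_upwards [ae_restrict_mem measurableSet_uIoc] with s hs
    rw [uIoc_of_le hle] at hs
    have hsIcc : s ∈ Icc a b := by
      have h2 := Ioc_subset_Icc_self hs
      exact ⟨le_trans (ht_mem i (le_of_lt hi)).1 h2.1, le_trans h2.2 (ht_mem (i+1) hi).2⟩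
    have hd1 : dist (t (i+1)) s < r := by
      rw [Real.dist_eq, abs_of_nonneg (by linarith [hs.2])]
      have h1 : t i < s := hs.1
      have h2 : s ≤ t (i+1) := hs.2
      have h3 := ht_diff i
      have h4 : t (i + 1) - s < t (i + 1) - t i := by linarith
      have h5 : t (i + 1) - t i < r := by rw [h3]; exact hmesh
      linarith
    have hd2 : dist (t i) s < r := by
      rw [Real.dist_eq, abs_of_nonpos (by linarith [hs.1])]
      have h1 : t i < s := hs.1
      have h2 : s ≤ t (i+1) := hs.2
      have h3 := ht_diff i
      have h4 : t (i + 1) - s < t (i + 1) - t i := by linarith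
      have h5 : t (i + 1) - t i < r := by rw [h3]; exact hmesh
      linarith
    have hv1 : dist (v (t (i+1))) (v s) < ρ :=
      hrP _ (ht_mem (i+1) hi) s hsIcc hd1
    have hv2 : dist (v (t i)) (v s) < ρ :=
      hrP _ (ht_mem i (le_of_lt hi)) s hsIcc hd2
    have hnv : ‖v (t (i+1)) + v (t i) - (2:ℝ) • v s‖ ≤ 2 * ρ := by
      have hrw : v (t (i+1)) + v (t i) - (2:ℝ) • v s
          = (v (t (i+1)) - v s) + (v (t i) - v s) := by
        rw [two_smul]; abel
      rw [hrw]
      calc ‖(v (t (i+1)) - v s) + (v (t i) - v s)‖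
          ≤ ‖v (t (i+1)) - v s‖ + ‖v (t i) - v s‖ := norm_add_le _ _
        _ ≤ 2 * ρ := by
            rw [← dist_eq_norm, ← dist_eq_norm]
            linarith
    calc ‖⟪v (t (i+1)) + v (t i) - (2:ℝ) • v s, G s⟫‖
        ≤ ‖v (t (i+1)) + v (t i) - (2:ℝ) • v s‖ * ‖G s‖ := by
          rw [Real.norm_eq_abs]; exact abs_real_inner_le_norm _ _
      _ ≤ 2 * ρ * ‖G s‖ := mul_le_mul_of_nonneg_right hnv (norm_nonneg _)
  have hsum2 : ∑ i ∈ Finset.range (n+1), ∫ s in t i..t (i+1), 2 * ρ * ‖G s‖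
      = 2 * ρ * K := by
    rw [intervalIntegral.sum_integral_adjacent_intervals
      (fun i hi => (hG.norm.const_mul (2 * ρ)).mono_set (hsubI i hi)), ht_zero, ht_last,
      intervalIntegral.integral_const_mul]
  calc |D| ≤ ∑ i ∈ Finset.range (n+1),
        |∫ s in t i..t (i+1), ⟪v (t (i+1)) + v (t i) - (2:ℝ) • v s, G s⟫| := by
        rw [hDsum]; exact Finset.abs_sum_le_sum_abs _ _
    _ ≤ ∑ i ∈ Finset.range (n+1), ∫ s in t i..t (i+1), 2 * ρ * ‖G s‖ :=
        Finset.sum_le_sum (fun i hi => hbound i (Finset.mem_range.mp hi))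
    _ = 2 * ρ * K := hsum2
    _ ≤ δ := by
        rw [hρdef]
        have h2K : (0:ℝ) < 2 * K + 2 := by positivity
        have hrw2 : 2 * (δ / (2 * K + 2)) * K = δ * (2 * K) / (2 * K + 2) := by ring
        rw [hrw2, div_le_iff₀ h2K]
        nlinarith

lemma tail_small (t₀ : ℝ) (ψ : ℝ → ℝ)
    (hpos : ∀ s, t₀ ≤ s → 0 ≤ ψ s)
    (hint : ∀ a b, t₀ ≤ a → a ≤ b → IntervalIntegrable ψ volume a b)
    (C : ℝ) (hC : ∀ b, t₀ ≤ b → (∫ s in t₀..b, ψ s) ≤ C) :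
    ∀ ε : ℝ, 0 < ε → ∃ N, t₀ ≤ N ∧ ∀ a b, N ≤ a → a ≤ b →
      (∫ s in a..b, ψ s) < ε := by
  intro ε hε
  set I : ℝ → ℝ := fun b => ∫ s in t₀..b, ψ s with hI
  have hne : (I '' Ici t₀).Nonempty := ⟨I t₀, ⟨t₀, self_mem_Ici, rfl⟩⟩
  have hbdd : BddAbove (I '' Ici t₀) := ⟨C, by rintro x ⟨b, hb, rfl⟩; exact hC b hb⟩
  set A := sSup (I '' Ici t₀) with hA
  obtain ⟨y, ⟨N, hN, rfl⟩, hy⟩ := exists_lt_of_lt_csSup hne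
    (show A - ε < A by linarith)
  refine ⟨N, hN, ?_⟩
  intro a b ha hab
  have ht₀a : t₀ ≤ a := hN.trans ha
  have ht₀b : t₀ ≤ b := ht₀a.trans hab
  have key : (∫ s in a..b, ψ s) = I b - I a :=
    (intervalIntegral.integral_interval_sub_left (hint t₀ b le_rfl ht₀b)
      (hint t₀ a le_rfl ht₀a)).symm
  have hIb : I b ≤ A := le_csSup hbdd ⟨b, ht₀b, rfl⟩
  have hmono : I N ≤ I a := by
    have h1 : I a - I N = ∫ s in N..a, ψ s :=
      intervalIntegral.integral_interval_sub_left (hint t₀ a le_rfl ht₀a)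
        (hint t₀ N le_rfl hN)
    have h2 : 0 ≤ ∫ s in N..a, ψ s :=
      intervalIntegral.integral_nonneg ha (fun s hs => hpos s (hN.trans hs.1))
    linarith
  rw [key]
  linarith

set_option maxHeartbeats 2000000 in
theorem stmt_2
    {H : Type*} [NormedAddCommGroup H] [InnerProductSpace ℝ H] [CompleteSpace H]
    (T : H → H)
    (hT : ∀ (y x : H), T x = x → ‖T y - x‖ ≤ ‖y - x‖)
    (hfix : ∃ x : H, T x = x)
    (hTuc : UniformContinuous T)
    (t₀ : ℝ) (ht₀ : 0 < t₀)
    (θ : ℝ → ℝ) (hθ : ∀ t, t₀ ≤ t → 0 ≤ θ t)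
    (hθint : ∀ b : ℝ, IntervalIntegrable θ volume t₀ b)
    (c : ℝ) (hc : 0 < c) (hcθ : ∀ t, t₀ ≤ t → c ≤ θ t)
    (f : ℝ → H)
    (hfint : IntegrableOn (fun s => ‖f s‖) (Set.Ici t₀))
    (u : ℝ → H) (u₀ : H)
    (huint : ∀ t, t₀ ≤ t →
      IntervalIntegrable (fun s => θ s • (T (u s) - u s) + f s) volume t₀ t)
    (husol : ∀ t, t₀ ≤ t →
      u t = u₀ + ∫ s in t₀..t, (θ s • (T (u s) - u s) + f s)) :
    Tendsto (fun t => ‖T (u t) - u t‖) atTop (nhds 0) := by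
  obtain ⟨p, hp⟩ := hfix
  set G : ℝ → H := fun s => θ s • (T (u s) - u s) + f s with hGdef
  set w : ℝ → H := fun s => θ s • (T (u s) - u s) with hwdef
  set g : ℝ → ℝ := fun s => ‖T (u s) - u s‖ with hgdef
  set q2 : ℝ → ℝ := fun s => ‖w s‖ * g s with hq2def
  set v : ℝ → H := fun s => u s - p with hvdef
  have hG_eq : ∀ s, G s = w s + f s := fun s => rfl
  have hw_eqs : ∀ s, w s = θ s • (T (u s) - u s) := fun s => rfl
  have hv_eqs : ∀ s, v s = u s - p := fun s => rfl
  have hg_eqs : ∀ s, g s = ‖T (u s) - u s‖ := fun s => rfl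
  have hq2_eqs : ∀ s, q2 s = ‖w s‖ * g s := fun s => rfl
  have huint' : ∀ t, t₀ ≤ t → IntervalIntegrable G volume t₀ t := fun t ht => huint t ht
  have husol' : ∀ t, t₀ ≤ t → u t = u₀ + ∫ s in t₀..t, G s := fun t ht => husol t ht
  show Tendsto g atTop (nhds 0)
  clear_value G w g q2 v
  clear huint husol hGdef hwdef hgdef hq2def hvdef
  have hgnn : ∀ s, 0 ≤ g s := fun s => by rw [hg_eqs s]; exact norm_nonneg _
  have hq2nn : ∀ s, 0 ≤ q2 s := fun s => by
    rw [hq2_eqs s]; exact mul_nonneg (norm_nonneg _) (hgnn s)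
  have hq2theta : ∀ s, t₀ ≤ s → q2 s = θ s * g s ^ 2 := by
    intro s hs
    rw [hq2_eqs s, hw_eqs s, hg_eqs s, norm_smul, Real.norm_eq_abs,
      abs_of_nonneg (hθ s hs)]
    ring
  -- continuity of u on [t₀, ∞)
  have hprim : ContinuousOn (fun x => ∫ s in t₀..x, G s) (Ici t₀) := by
    intro x hx
    have hx' : t₀ ≤ x := hx
    have hcw : ContinuousOn (fun b => ∫ s in t₀..b, G s) (uIcc t₀ (x+1)) := by
      exact intervalIntegral.continuousOn_primitive_interval'
        (huint' (x+1) (by linarith)) left_mem_uIcc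
    have hxmem : x ∈ uIcc t₀ (x+1) := by
      rw [uIcc_of_le (by linarith)]; exact ⟨hx', by linarith⟩
    refine (hcw x hxmem).mono_of_mem_nhdsWithin ?_
    rw [uIcc_of_le (by linarith : t₀ ≤ x + 1), ← Ici_inter_Iic]
    exact Filter.inter_mem self_mem_nhdsWithin
      (mem_nhdsWithin_of_mem_nhds (Iic_mem_nhds (lt_add_one x)))
  have hu_cont : ContinuousOn u (Ici t₀) := by
    have hadd : ContinuousOn (fun x : ℝ => u₀ + ∫ s in t₀..x, G s) (Ici t₀) :=
      continuousOn_const.add hprim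
    exact hadd.congr (fun x hx => husol' x hx)
  have hh_cont : ContinuousOn (fun s => T (u s) - u s) (Ici t₀) :=
    (hTuc.continuous.comp_continuousOn hu_cont).sub hu_cont
  have hg_cont : ContinuousOn g (Ici t₀) := by
    refine ContinuousOn.congr hh_cont.norm (fun x _ => hg_eqs x)
  have hv_cont : ContinuousOn v (Ici t₀) := by
    refine ContinuousOn.congr (hu_cont.sub continuousOn_const) (fun x _ => hv_eqs x)
  -- basic integral identity for u
  have husub : ∀ s t : ℝ, t₀ ≤ s → s ≤ t → u t - u s = ∫ r in s..t, G r := by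
    intro s t hs hst
    rw [husol' t (hs.trans hst), husol' s hs, add_sub_add_left_eq_sub]
    exact intervalIntegral.integral_interval_sub_left
      (huint' t (hs.trans hst)) (huint' s hs)
  -- interval integrability of G
  have hGi : ∀ a b, t₀ ≤ a → a ≤ b → IntervalIntegrable G volume a b := by
    intro a b ha hab
    exact (huint' b (ha.trans hab)).mono_set (by
      rw [uIcc_of_le hab, uIcc_of_le (ha.trans hab)]
      exact Icc_subset_Icc ha le_rfl)
  -- interval integrability of ‖f‖
  have hfni : ∀ a b, t₀ ≤ a → a ≤ b →
      IntervalIntegrable (fun s => ‖f s‖) volume a b := by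
    intro a b ha hab
    rw [intervalIntegrable_iff_integrableOn_Ioc_of_le hab]
    exact hfint.mono_set (fun x hx => ha.trans hx.1.le)
  -- a.e. measurability of f on subintervals
  have hfmeas : ∀ a b, t₀ ≤ a → a ≤ b →
      AEStronglyMeasurable f (volume.restrict (Ioc a b)) := by
    intro a b ha hab
    have hθm : AEStronglyMeasurable θ (volume.restrict (Ioc a b)) :=
      (hθint b).1.aestronglyMeasurable.mono_measure
        (Measure.restrict_mono (Ioc_subset_Ioc_left ha) le_rfl)
    have hhm : AEStronglyMeasurable (fun s => T (u s) - u s)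
        (volume.restrict (Ioc a b)) :=
      (hh_cont.mono (fun x hx => ha.trans hx.1.le)).aestronglyMeasurable measurableSet_Ioc
    have hGm : AEStronglyMeasurable G (volume.restrict (Ioc a b)) :=
      ((intervalIntegrable_iff_integrableOn_Ioc_of_le hab).mp
        (hGi a b ha hab)).aestronglyMeasurable
    have hfw : f = fun s => G s - θ s • (T (u s) - u s) := by
      funext s; rw [hG_eq s, hw_eqs s]; abel
    rw [hfw]
    exact hGm.sub (hθm.smul hhm)
  -- interval integrability of f
  have hfi : ∀ a b, t₀ ≤ a → a ≤ b → IntervalIntegrable f volume a b := by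
    intro a b ha hab
    rw [intervalIntegrable_iff_integrableOn_Ioc_of_le hab]
    refine Integrable.mono'
      ((intervalIntegrable_iff_integrableOn_Ioc_of_le hab).mp (hfni a b ha hab))
      (hfmeas a b ha hab) (ae_of_all _ (fun s => le_rfl))
  -- interval integrability of w
  have hwi : ∀ a b, t₀ ≤ a → a ≤ b → IntervalIntegrable w volume a b := by
    intro a b ha hab
    have hweq : w = fun s => G s - f s := by funext s; rw [hG_eq s]; abel
    rw [hweq]
    exact (hGi a b ha hab).sub (hfi a b ha hab)
  -- interval integrability of q2
  have hq2i : ∀ a b, t₀ ≤ a → a ≤ b → IntervalIntegrable q2 volume a b := by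
    intro a b ha hab
    obtain ⟨M, hM⟩ := isCompact_Icc.exists_bound_of_continuousOn
      (hg_cont.mono (fun x (hx : x ∈ Icc a b) => ha.trans hx.1))
    rw [intervalIntegrable_iff_integrableOn_Ioc_of_le hab,
      show q2 = fun s => ‖w s‖ * g s from funext hq2_eqs]
    have hwInt := (intervalIntegrable_iff_integrableOn_Ioc_of_le hab).mp (hwi a b ha hab)
    refine Integrable.mono' (hwInt.norm.mul_const M) ?_ ?_
    · exact hwInt.aestronglyMeasurable.norm.mul
        ((hg_cont.mono (fun x hx => ha.trans hx.1.le)).aestronglyMeasurable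
          measurableSet_Ioc)
    · filter_upwards [ae_restrict_mem measurableSet_Ioc] with s hs
      have h1 : g s ≤ M := le_trans (le_abs_self _) (by
        have := hM s (Ioc_subset_Icc_self hs); rwa [Real.norm_eq_abs] at this)
      rw [Real.norm_eq_abs, abs_of_nonneg (mul_nonneg (norm_nonneg _) (hgnn s))]
      exact mul_le_mul_of_nonneg_left h1 (norm_nonneg _)
  -- interval integrability of ‖f‖ * ‖v‖
  have hfvI : ∀ a b, t₀ ≤ a → a ≤ b →
      IntervalIntegrable (fun s => ‖f s‖ * ‖v s‖) volume a b := by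
    intro a b ha hab
    obtain ⟨Mv, hMv⟩ := isCompact_Icc.exists_bound_of_continuousOn
      (hv_cont.mono (fun x (hx : x ∈ Icc a b) => ha.trans hx.1))
    rw [intervalIntegrable_iff_integrableOn_Ioc_of_le hab]
    refine Integrable.mono'
      (((intervalIntegrable_iff_integrableOn_Ioc_of_le hab).mp
        (hfni a b ha hab)).mul_const Mv)
      ((hfmeas a b ha hab).norm.mul
        ((hv_cont.mono (fun x hx => ha.trans hx.1.le)).norm.aestronglyMeasurable
          measurableSet_Ioc)) ?_
    filter_upwards [ae_restrict_mem measurableSet_Ioc] with s hs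
    rw [Real.norm_eq_abs, abs_of_nonneg (mul_nonneg (norm_nonneg _) (norm_nonneg _))]
    exact mul_le_mul_of_nonneg_left (hMv s (Ioc_subset_Icc_self hs)) (norm_nonneg _)
  -- pointwise inner-product estimate
  have hinner : ∀ s, t₀ ≤ s →
      2 * ⟪G s, v s⟫ ≤ 2 * (‖f s‖ * ‖v s‖) - q2 s := by
    intro s hs
    have hq : ‖T (u s) - p‖ ≤ ‖u s - p‖ := hT (u s) p hp
    have hexp : ‖(T (u s) - u s) + (u s - p)‖ ^ 2 ≤ ‖u s - p‖ ^ 2 := by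
      rw [show (T (u s) - u s) + (u s - p) = T (u s) - p by abel]
      exact pow_le_pow_left₀ (norm_nonneg _) hq 2
    have hkey : 2 * ⟪T (u s) - u s, u s - p⟫ ≤ -‖T (u s) - u s‖ ^ 2 := by
      nlinarith [norm_add_sq_real (T (u s) - u s) (u s - p)]
    have hGv : ⟪G s, v s⟫
        = θ s * ⟪T (u s) - u s, u s - p⟫ + ⟪f s, u s - p⟫ := by
      rw [hG_eq s, hw_eqs s, hv_eqs s, inner_add_left, real_inner_smul_left]
    have hfv : ⟪f s, u s - p⟫ ≤ ‖f s‖ * ‖u s - p‖ := real_inner_le_norm _ _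
    have hθs := hθ s hs
    have hq2e : q2 s = θ s * g s ^ 2 := hq2theta s hs
    rw [hGv, hq2e, hg_eqs s, hv_eqs s]
    nlinarith [mul_le_mul_of_nonneg_left hkey hθs]
  -- energy identity
  have hkeyid : ∀ a b, t₀ ≤ a → a ≤ b →
      ‖v b‖ ^ 2 = ‖v a‖ ^ 2 + ∫ s in a..b, 2 * ⟪G s, v s⟫ := by
    intro a b ha hab
    refine key_ident hab (hGi a b ha hab)
      (hv_cont.mono (fun x (hx : x ∈ Icc a b) => ha.trans hx.1)) ?_
    intro s t hs hst htb
    have : v t - v s = u t - u s := by rw [hv_eqs t, hv_eqs s]; abel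
    rw [this]
    exact husub s t (ha.trans hs) hst
  -- main energy inequality
  have hmain : ∀ a b, t₀ ≤ a → a ≤ b →
      ‖v b‖ ^ 2 + (∫ s in a..b, q2 s)
        ≤ ‖v a‖ ^ 2 + 2 * ∫ s in a..b, ‖f s‖ * ‖v s‖ := by
    intro a b ha hab
    have hinnI : IntervalIntegrable (fun s => 2 * ⟪G s, v s⟫) volume a b :=
      (inner_integrableOn hab (hGi a b ha hab)
        (hv_cont.mono (fun x (hx : x ∈ Icc a b) => ha.trans hx.1))).const_mul 2
    have hfv := hfvI a b ha hab
    have hq2ab := hq2i a b ha hab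
    have hcombI : IntervalIntegrable (fun s => 2 * (‖f s‖ * ‖v s‖) - q2 s) volume a b :=
      (hfv.const_mul 2).sub hq2ab
    have hmono := intervalIntegral.integral_mono_on hab hinnI hcombI
      (fun s hs => hinner s (ha.trans hs.1))
    have hsplit2 : (∫ s in a..b, (2 * (‖f s‖ * ‖v s‖) - q2 s))
        = 2 * (∫ s in a..b, ‖f s‖ * ‖v s‖) - ∫ s in a..b, q2 s := by
      rw [intervalIntegral.integral_sub (hfv.const_mul 2) hq2ab,
        intervalIntegral.integral_const_mul]
    have hid := hkeyid a b ha hab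
    rw [hsplit2] at hmono
    linarith
  -- total mass of ‖f‖ and tail bounds for it
  set Fi : ℝ := ∫ s in Ici t₀, ‖f s‖ with hFidef
  have hFi0 : 0 ≤ Fi := setIntegral_nonneg measurableSet_Ici (fun x _ => norm_nonneg _)
  have hftail : ∀ a b, t₀ ≤ a → a ≤ b → (∫ s in a..b, ‖f s‖) ≤ Fi := by
    intro a b ha hab
    rw [intervalIntegral.integral_of_le hab, hFidef]
    exact setIntegral_mono_set hfint (ae_of_all _ (fun x => norm_nonneg _))
      (HasSubset.Subset.eventuallyLE (fun x hx => ha.trans hx.1.le))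
  -- boundedness of v
  set B : ℝ := Fi + Real.sqrt (‖v t₀‖ ^ 2 + Fi ^ 2) with hBdef
  have hB : ∀ b, t₀ ≤ b → ‖v b‖ ≤ B := by
    intro b hb
    obtain ⟨m, hm, hmax⟩ := isCompact_Icc.exists_isMaxOn (nonempty_Icc.mpr hb)
      ((hv_cont.mono (fun x (hx : x ∈ Icc t₀ b) => hx.1)).norm)
    have hmt : t₀ ≤ m := hm.1
    have h1 := hmain t₀ m le_rfl hmt
    have h2 : (∫ s in t₀..m, ‖f s‖ * ‖v s‖) ≤ ‖v m‖ * Fi := by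
      calc (∫ s in t₀..m, ‖f s‖ * ‖v s‖)
          ≤ ∫ s in t₀..m, ‖f s‖ * ‖v m‖ := by
            refine intervalIntegral.integral_mono_on hmt (hfvI t₀ m le_rfl hmt)
              ((hfni t₀ m le_rfl hmt).mul_const _) ?_
            intro s hs
            exact mul_le_mul_of_nonneg_left
              (hmax (⟨hs.1, hs.2.trans hm.2⟩ : s ∈ Icc t₀ b)) (norm_nonneg _)
        _ = (∫ s in t₀..m, ‖f s‖) * ‖v m‖ := intervalIntegral.integral_mul_const _ _
        _ ≤ Fi * ‖v m‖ := mul_le_mul_of_nonneg_right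
            (hftail t₀ m le_rfl hmt) (norm_nonneg _)
        _ = ‖v m‖ * Fi := mul_comm _ _
    have h3 : 0 ≤ ∫ s in t₀..m, q2 s :=
      intervalIntegral.integral_nonneg hmt (fun s _ => hq2nn s)
    have h4 : ‖v m‖ ^ 2 ≤ ‖v t₀‖ ^ 2 + 2 * (‖v m‖ * Fi) := by linarith
    have h5 : ‖v m‖ ≤ B := by
      have hs1 : 0 ≤ Real.sqrt (‖v t₀‖ ^ 2 + Fi ^ 2) := Real.sqrt_nonneg _
      have hs2 : (Real.sqrt (‖v t₀‖ ^ 2 + Fi ^ 2)) ^ 2 = ‖v t₀‖ ^ 2 + Fi ^ 2 :=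
        Real.sq_sqrt (by positivity)
      rw [hBdef]
      nlinarith
    exact le_trans (hmax (⟨hb, le_rfl⟩ : b ∈ Icc t₀ b)) h5
  have hB0 : 0 ≤ B := le_trans (norm_nonneg _) (hB t₀ le_rfl)
  -- uniform bound on the q2-integral
  have hC : ∀ b, t₀ ≤ b → (∫ s in t₀..b, q2 s) ≤ ‖v t₀‖ ^ 2 + 2 * (Fi * B) := by
    intro b hb
    have h1 := hmain t₀ b le_rfl hb
    have h2 : (∫ s in t₀..b, ‖f s‖ * ‖v s‖) ≤ Fi * B := by
      calc (∫ s in t₀..b, ‖f s‖ * ‖v s‖)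
          ≤ ∫ s in t₀..b, ‖f s‖ * B := by
            refine intervalIntegral.integral_mono_on hb (hfvI t₀ b le_rfl hb)
              ((hfni t₀ b le_rfl hb).mul_const _) ?_
            intro s hs
            exact mul_le_mul_of_nonneg_left (hB s hs.1) (norm_nonneg _)
        _ = (∫ s in t₀..b, ‖f s‖) * B := intervalIntegral.integral_mul_const _ _
        _ ≤ Fi * B := mul_le_mul_of_nonneg_right (hftail t₀ b le_rfl hb) hB0
    nlinarith [sq_nonneg ‖v b‖]
  -- tail estimates
  have htailq2 := tail_small t₀ q2 (fun s _ => hq2nn s) hq2i _ hC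
  have htailf := tail_small t₀ (fun s => ‖f s‖) (fun s _ => norm_nonneg _) hfni Fi
    (fun b hb => hftail t₀ b le_rfl hb)
  -- final argument
  rw [Metric.tendsto_atTop]
  intro ε hε
  have hPuc : UniformContinuous (fun y : H => T y - y) := hTuc.sub uniformContinuous_id
  rw [Metric.uniformContinuous_iff] at hPuc
  obtain ⟨η, hη, hP⟩ := hPuc (ε/2) (by linarith)
  obtain ⟨N₁, hN₁t, hN₁⟩ := htailq2 (ε*η/4) (by positivity)
  obtain ⟨N₂, hN₂t, hN₂⟩ := htailf (η/4) (by positivity)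
  obtain ⟨N₃, hN₃t, hN₃⟩ := htailq2 1 one_pos
  set Δ : ℝ := 2/(c*(ε/2)^2) with hΔdef
  have hΔ : 0 < Δ := by positivity
  refine ⟨max N₁ (max N₂ N₃), ?_⟩
  intro x hx
  have hx1 : N₁ ≤ x := (le_max_left _ _).trans hx
  have hx2 : N₂ ≤ x := ((le_max_left _ _).trans (le_max_right _ _)).trans hx
  have hx3 : N₃ ≤ x := ((le_max_right _ _).trans (le_max_right _ _)).trans hx
  have hxt₀ : t₀ ≤ x := hN₁t.trans hx1
  have hdist : dist (g x) 0 = g x := by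
    rw [Real.dist_eq, sub_zero, abs_of_nonneg (hgnn x)]
  rw [hdist]
  by_contra hcon
  push_neg at hcon
  -- hcon : ε ≤ g x
  have hgood : ∀ r', t₀ ≤ r' → ‖u r' - u x‖ < η → ε/2 < g r' := by
    intro r' _ hclose
    have h1 : dist (T (u r') - u r') (T (u x) - u x) < ε/2 :=
      hP (show dist (u r') (u x) < η by rwa [dist_eq_norm])
    have h2 : |g r' - g x| ≤ dist (T (u r') - u r') (T (u x) - u x) := by
      rw [dist_eq_norm, hg_eqs r', hg_eqs x]
      exact abs_norm_sub_norm_le _ _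
    have h3 := lt_of_le_of_lt h2 h1
    have h4 := abs_lt.mp h3
    linarith [h4.1]
  set S : Set ℝ := {s | s ∈ Icc x (x+Δ) ∧ η ≤ ‖u s - u x‖} with hSdef
  by_cases hS : S.Nonempty
  · -- there is a first escape time
    have hScomp : IsCompact S := by
      have hcont : ContinuousOn (fun s => ‖u s - u x‖) (Icc x (x+Δ)) :=
        ((hu_cont.mono (fun y (hy : y ∈ Icc x (x+Δ)) => hxt₀.trans hy.1)).sub
          continuousOn_const).norm
      have hSeq : S = Icc x (x+Δ) ∩ (fun s => ‖u s - u x‖) ⁻¹' (Ici η) := by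
        ext y; simp [hSdef, Set.mem_inter_iff, Set.mem_preimage]
      rw [hSeq]
      exact isCompact_Icc.of_isClosed_subset
        (hcont.preimage_isClosed_of_isClosed isClosed_Icc isClosed_Ici)
        inter_subset_left
    set s₀ := sInf S with hs₀def
    have hs₀S : s₀ ∈ S := hScomp.sInf_mem hS
    obtain ⟨hs₀I, hs₀η⟩ := hs₀S
    have hxs₀ : x < s₀ := by
      rcases lt_or_eq_of_le hs₀I.1 with h | h
      · exact h
      · exfalso
        rw [← h] at hs₀η
        simp only [sub_self, norm_zero] at hs₀η
        linarith
    have hxs₀le : x ≤ s₀ := hxs₀.le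
    have hbefore : ∀ r', r' ∈ Ico x s₀ → ε/2 < g r' := by
      intro r' hr'
      have hr'm : r' ∈ Icc x (x+Δ) := ⟨hr'.1, hr'.2.le.trans hs₀I.2⟩
      have hnot : ¬ η ≤ ‖u r' - u x‖ := by
        intro hcontr
        have : s₀ ≤ r' := csInf_le hScomp.bddBelow ⟨hr'm, hcontr⟩
        linarith [hr'.2]
      push_neg at hnot
      exact hgood r' (hxt₀.trans hr'.1) hnot
    have e1 : η ≤ ‖u s₀ - u x‖ := hs₀η
    have e2 : u s₀ - u x = ∫ r in x..s₀, G r := husub x s₀ hxt₀ hxs₀le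
    have e3 : ‖∫ r in x..s₀, G r‖ ≤ ∫ r in x..s₀, ‖G r‖ :=
      intervalIntegral.norm_integral_le_integral_norm hxs₀le
    have e4 : (∫ r in x..s₀, ‖G r‖)
        ≤ (∫ r in x..s₀, ‖w r‖) + ∫ r in x..s₀, ‖f r‖ := by
      rw [← intervalIntegral.integral_add ((hwi x s₀ hxt₀ hxs₀le).norm)
        (hfni x s₀ hxt₀ hxs₀le)]
      refine intervalIntegral.integral_mono_on hxs₀le
        ((hGi x s₀ hxt₀ hxs₀le).norm)
        (((hwi x s₀ hxt₀ hxs₀le).norm).add (hfni x s₀ hxt₀ hxs₀le)) ?_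
      intro s _
      calc ‖G s‖ = ‖w s + f s‖ := by rw [hG_eq s]
        _ ≤ ‖w s‖ + ‖f s‖ := norm_add_le _ _
    have e5 : (∫ r in x..s₀, ‖w r‖) ≤ (2/ε) * ∫ r in x..s₀, q2 r := by
      rw [← intervalIntegral.integral_const_mul]
      refine intervalIntegral.integral_mono_ae_restrict hxs₀le
        ((hwi x s₀ hxt₀ hxs₀le).norm) ((hq2i x s₀ hxt₀ hxs₀le).const_mul _) ?_
      have hns : ∀ᵐ s : ℝ ∂volume, s ≠ s₀ := by
        rw [ae_iff]
        have : {a : ℝ | ¬ a ≠ s₀} = {s₀} := by ext y; simp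
        rw [this]
        exact Real.volume_singleton
      filter_upwards [ae_restrict_of_ae hns, ae_restrict_mem measurableSet_Icc]
        with s hne hmem
      have hsIco : s ∈ Ico x s₀ := ⟨hmem.1, lt_of_le_of_ne hmem.2 hne⟩
      have hgs := hbefore s hsIco
      rw [hq2_eqs s]
      have hw0 : 0 ≤ ‖w s‖ := norm_nonneg _
      have hone : 1 ≤ (2/ε) * g s := by
        rw [div_mul_eq_mul_div, le_div_iff₀ hε]
        linarith
      nlinarith
    have hq2tail : (∫ r in x..s₀, q2 r) < ε*η/4 := hN₁ x s₀ hx1 hxs₀le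
    have hftail2 : (∫ r in x..s₀, ‖f r‖) < η/4 := hN₂ x s₀ hx2 hxs₀le
    have hq2tailnn : 0 ≤ ∫ r in x..s₀, q2 r :=
      intervalIntegral.integral_nonneg hxs₀le (fun s _ => hq2nn s)
    have h2ε : (0:ℝ) < 2/ε := by positivity
    have hfin : (2/ε) * (∫ r in x..s₀, q2 r) < (2/ε) * (ε*η/4) :=
      mul_lt_mul_of_pos_left hq2tail h2ε
    have h2eη : (2/ε) * (ε*η/4) = η/2 := by field_simp; ring
    rw [e2] at e1
    linarith
  · -- no escape: g stays ≥ ε/2 on [x, x+Δ], contradiction with small q2 integral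
    have hall : ∀ s ∈ Icc x (x+Δ), ‖u s - u x‖ < η := by
      intro s hs
      by_contra hge
      push_neg at hge
      exact hS ⟨s, hs, hge⟩
    have hlow : ∀ s ∈ Icc x (x+Δ), c*(ε/2)^2 ≤ q2 s := by
      intro s hs
      have hst₀ : t₀ ≤ s := hxt₀.trans hs.1
      have hgs : ε/2 < g s := hgood s hst₀ (hall s hs)
      rw [hq2theta s hst₀]
      have hθc := hcθ s hst₀
      have hg0 : 0 ≤ g s := hgnn s
      have h1 : (ε/2)^2 ≤ g s^2 := by nlinarith
      calc c*(ε/2)^2 ≤ θ s * g s^2 :=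
            mul_le_mul hθc h1 (by positivity) (hc.le.trans hθc)
        _ = θ s * g s^2 := rfl
    have hint1 : (∫ s in x..x+Δ, q2 s) < 1 := hN₃ x (x+Δ) hx3 (by linarith)
    have hint2 : c*(ε/2)^2*Δ ≤ ∫ s in x..x+Δ, q2 s := by
      have := intervalIntegral.integral_mono_on (by linarith : x ≤ x+Δ)
        (intervalIntegrable_const) (hq2i x (x+Δ) hxt₀ (by linarith)) hlow
      rwa [intervalIntegral.integral_const, smul_eq_mul, add_sub_cancel_left,
        mul_comm] at this
    have hΔval : c*(ε/2)^2*Δ = 2 := by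
      have hcne : c*(ε/2)^2 ≠ 0 := by positivity
      rw [hΔdef]
      field_simp
    linarith
end

section
/- Let T, T₁, T₂ : H → H be operators with Fix(T) ≠ ∅ and I − T = μ(T₁ − T₂) for some μ ≠ 0. Suppose there exist ω₀, ω₁, ω₂ ∈ ℝ such that for all x ∈ H and all x* ∈ Fix(T): ‖T(x) − x*‖² ≤ ‖x − x*‖² − ω₀‖x − T(x)‖² − ω₁‖T₁(x) − T₁(x*)‖² − ω₂‖T₂(x) − T₂(x*)‖², where either (ω₁ = ω₂ = 0 and ω₀ > 0) or (ω₁ + ω₂ > 0 and ω₀ + ω₁ω₂/(μ²(ω₁ + ω₂)) > 0). Then T is quasi-nonexpansive. -/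
open MeasureTheory Filter Set
open scoped RealInnerProductSpace

theorem stmt_4
    {H : Type*} [NormedAddCommGroup H] [InnerProductSpace ℝ H] [CompleteSpace H]
    (T T₁ T₂ : H → H) (μ : ℝ) (hμ : μ ≠ 0)
    (hdecomp : ∀ x : H, x - T x = μ • (T₁ x - T₂ x))
    (hfix : ∃ x : H, T x = x)
    (ω₀ ω₁ ω₂ : ℝ)
    (hω : (ω₁ = 0 ∧ ω₂ = 0 ∧ 0 < ω₀) ∨
          (0 < ω₁ + ω₂ ∧ 0 < ω₀ + ω₁ * ω₂ / (μ ^ 2 * (ω₁ + ω₂))))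
    (hineq : ∀ (x xs : H), T xs = xs →
      ‖T x - xs‖ ^ 2 ≤ ‖x - xs‖ ^ 2 - ω₀ * ‖x - T x‖ ^ 2
        - ω₁ * ‖T₁ x - T₁ xs‖ ^ 2 - ω₂ * ‖T₂ x - T₂ xs‖ ^ 2) :
    ∀ (y x : H), T x = x → ‖T y - x‖ ≤ ‖y - x‖ := by
  intro y x hx
  have key := hineq y x hx
  have hsq : ‖T y - x‖ ^ 2 ≤ ‖y - x‖ ^ 2 := by
    have hnn : 0 ≤ ω₀ * ‖y - T y‖ ^ 2 + ω₁ * ‖T₁ y - T₁ x‖ ^ 2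
        + ω₂ * ‖T₂ y - T₂ x‖ ^ 2 := by
      rcases hω with ⟨h1, h2, h0⟩ | ⟨hsum, hpos⟩
      · subst h1; subst h2
        have := sq_nonneg ‖y - T y‖
        nlinarith
      · -- T₁ x = T₂ x since x is a fixed point
        have hfx : T₁ x = T₂ x := by
          have h := hdecomp x
          rw [hx, sub_self] at h
          have h' : T₁ x - T₂ x = 0 := by
            rcases smul_eq_zero.mp h.symm with h' | h'
            · exact absurd h' hμ
            · exact h'
          exact sub_eq_zero.mp h'
        set u := T₁ y - T₁ x with hu
        set v := T₂ y - T₂ x with hv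
        have huv : u - v = T₁ y - T₂ y := by
          rw [hu, hv, hfx]; abel
        have hyt : y - T y = μ • (u - v) := by
          rw [huv, hdecomp y]
        have ha : ‖y - T y‖ ^ 2 = μ ^ 2 * ‖u - v‖ ^ 2 := by
          rw [hyt, norm_smul, Real.norm_eq_abs, mul_pow, sq_abs]
        have e1 : ‖u - v‖ ^ 2 = ‖u‖ ^ 2 - 2 * ⟪u, v⟫ + ‖v‖ ^ 2 :=
          norm_sub_sq_real u v
        have hw0 : (0:ℝ) ≤ ‖ω₁ • u + ω₂ • v‖ ^ 2 := sq_nonneg _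
        have hw : ‖ω₁ • u + ω₂ • v‖ ^ 2
            = ω₁ ^ 2 * ‖u‖ ^ 2 + 2 * (ω₁ * ω₂) * ⟪u, v⟫ + ω₂ ^ 2 * ‖v‖ ^ 2 := by
          rw [norm_add_sq_real, norm_smul, norm_smul, real_inner_smul_left,
            real_inner_smul_right, Real.norm_eq_abs, Real.norm_eq_abs,
            mul_pow, mul_pow, sq_abs, sq_abs]
          ring
        have hμ2 : 0 < μ ^ 2 := by positivity
        have hd : 0 < μ ^ 2 * (ω₁ + ω₂) := mul_pos hμ2 hsum
        have hK : 0 < ω₀ * μ ^ 2 * (ω₁ + ω₂) + ω₁ * ω₂ := by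
          have h := mul_pos hpos hd
          rw [add_mul, div_mul_cancel₀ _ (ne_of_gt hd)] at h
          nlinarith
        have hΔ : (0:ℝ) ≤ ‖u‖ ^ 2 - 2 * ⟪u, v⟫ + ‖v‖ ^ 2 := e1 ▸ sq_nonneg _
        have hw0' : (0:ℝ) ≤ ω₁ ^ 2 * ‖u‖ ^ 2 + 2 * (ω₁ * ω₂) * ⟪u, v⟫
            + ω₂ ^ 2 * ‖v‖ ^ 2 := hw ▸ hw0
        rw [ha, e1]
        nlinarith [mul_nonneg hK.le hΔ, hw0', hsum]
    nlinarith
  have h1 : (0:ℝ) ≤ ‖T y - x‖ := norm_nonneg _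
  have h2 : (0:ℝ) ≤ ‖y - x‖ := norm_nonneg _
  nlinarith
end

section
/- Let T : H → H be a quasi-nonexpansive operator with Fix(T) ≠ ∅ satisfying the demiclosedness principle, let u be a strong global solution of u'(t) = θ(t)(T(u(t)) − u(t)) + f(t), u(t₀) = u₀, and let û ∈ Fix(T) be such that u(t) converges weakly to û. Suppose I − T is metrically subregular at û for 0 with radius r and modulus κ > 0, and that r > lim_{t→∞} ‖u(t) − û‖ (this limit exists). Then there exist t' ≥ t₀ and M₁ > 0 such that for all t ≥ t': dist²(u(t), Fix(T)) ≤ e^{−(1/κ²)∫_{t'}^{t} θ(s) ds} · ( M₁ ∫_{t'}^{t} ‖f(s)‖ e^{(1/κ²)∫_{t'}^{s} θ(x) dx} ds + ‖u(t') − û‖² ). -/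
open MeasureTheory Filter Set
open scoped RealInnerProductSpace
set_option maxHeartbeats 1600000

lemma energy_aux {H : Type*} [NormedAddCommGroup H] [InnerProductSpace ℝ H] [CompleteSpace H]
    (v : ℝ → H) (s t : ℝ) (hst : s ≤ t) (hv : IntegrableOn v (Set.Ioc s t)) :
    ‖∫ τ in Set.Ioc s t, v τ‖ ^ 2 =
      2 * ∫ τ in Set.Ioc s t, ⟪v τ, ∫ σ in Set.Ioc s τ, v σ⟫ := by
  set μ : Measure ℝ := volume.restrict (Set.Ioc s t) with hμ
  set W : ℝ → H := fun τ => ∫ σ in Set.Ioc s τ, v σ with hW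
  have hvmeas : AEStronglyMeasurable v μ := hv.aestronglyMeasurable
  have hvIcc : IntegrableOn v (Set.Icc s t) :=
    (integrableOn_Icc_iff_integrableOn_Ioc).2 hv
  have hWcont : ContinuousOn W (Set.Icc s t) := intervalIntegral.continuousOn_primitive hvIcc
  have hWmeas : AEStronglyMeasurable W μ :=
    (hWcont.mono Set.Ioc_subset_Icc_self).aestronglyMeasurable measurableSet_Ioc
  -- the kernel function
  set F : ℝ × ℝ → ℝ := fun p => if p.2 ≤ p.1 then ⟪v p.1, v p.2⟫ else 0 with hF
  have hFmeas : AEStronglyMeasurable F (μ.prod μ) := by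
    have h1 : AEStronglyMeasurable (fun p : ℝ × ℝ => ⟪v p.1, v p.2⟫) (μ.prod μ) :=
      (hvmeas.comp_fst).inner (hvmeas.comp_snd)
    have h2 : MeasurableSet {p : ℝ × ℝ | p.2 ≤ p.1} :=
      (isClosed_le continuous_snd continuous_fst).measurableSet
    have : F = Set.indicator {p : ℝ × ℝ | p.2 ≤ p.1}
        (fun p => ⟪v p.1, v p.2⟫) := by
      funext p
      simp only [hF, Set.indicator_apply, Set.mem_setOf_eq]
    rw [this]
    exact h1.indicator h2
  have hFint : Integrable F (μ.prod μ) := by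
    refine Integrable.mono' (Integrable.mul_prod hv.norm hv.norm) hFmeas ?_
    filter_upwards with p
    by_cases h : p.2 ≤ p.1
    · simp only [hF, if_pos h]
      exact (abs_real_inner_le_norm _ _).trans le_rfl
    · simp only [hF, if_neg h, norm_zero]
      positivity
  have hswap : ∫ τ, (∫ σ, F (τ, σ) ∂μ) ∂μ = ∫ σ, (∫ τ, F (τ, σ) ∂μ) ∂μ :=
    integral_integral_swap hFint
  -- identify the left side
  have hL : ∫ τ, (∫ σ, F (τ, σ) ∂μ) ∂μ = ∫ τ in Set.Ioc s t, ⟪v τ, W τ⟫ := by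
    rw [hμ]
    refine setIntegral_congr_fun measurableSet_Ioc (fun τ hτ => ?_)
    have e1 : (fun σ => F (τ, σ)) =
        Set.indicator (Set.Iic τ) (fun σ => ⟪v τ, v σ⟫) := by
      funext σ
      simp only [hF, Set.indicator_apply, Set.mem_Iic]
    rw [e1, setIntegral_indicator measurableSet_Iic]
    have e2 : Set.Ioc s t ∩ Set.Iic τ = Set.Ioc s τ := by
      rw [Set.Ioc_inter_Iic, min_eq_right hτ.2]
    rw [e2]
    simp only [hW]
    exact integral_inner (𝕜 := ℝ) (hv.mono_set (Set.Ioc_subset_Ioc_right hτ.2)) (v τ)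
  -- identify the right side
  have hR : ∫ σ, (∫ τ, F (τ, σ) ∂μ) ∂μ =
      ∫ σ in Set.Ioc s t, ⟪(∫ τ in Set.Ioc s t, v τ) - W σ, v σ⟫ := by
    rw [hμ]
    refine setIntegral_congr_fun measurableSet_Ioc (fun σ hσ => ?_)
    have e1 : (fun τ => F (τ, σ)) =
        Set.indicator (Set.Ici σ) (fun τ => ⟪v τ, v σ⟫) := by
      funext τ
      simp only [hF, Set.indicator_apply, Set.mem_Ici]
    rw [e1, setIntegral_indicator measurableSet_Ici]
    have e2 : Set.Ioc s t ∩ Set.Ici σ = Set.Icc σ t := by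
      ext τ
      simp only [Set.mem_inter_iff, Set.mem_Ioc, Set.mem_Ici, Set.mem_Icc]
      constructor
      · rintro ⟨⟨_, h2⟩, h3⟩; exact ⟨h3, h2⟩
      · rintro ⟨h1, h2⟩; exact ⟨⟨lt_of_lt_of_le hσ.1 h1, h2⟩, h1⟩
    rw [e2, integral_Icc_eq_integral_Ioc]
    have e3 : ∫ τ in Set.Ioc σ t, ⟪v τ, v σ⟫ = ⟪∫ τ in Set.Ioc σ t, v τ, v σ⟫ := by
      rw [real_inner_comm, ← integral_inner (𝕜 := ℝ) (hv.mono_set (Set.Ioc_subset_Ioc_left hσ.1.le)) (v σ)]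
      exact setIntegral_congr_fun measurableSet_Ioc fun τ _ => real_inner_comm _ _
    rw [e3]
    congr 1
    have hdisj : Disjoint (Set.Ioc s σ) (Set.Ioc σ t) := Set.Ioc_disjoint_Ioc_of_le le_rfl
    have hunion := setIntegral_union hdisj measurableSet_Ioc
      (hv.mono_set (Set.Ioc_subset_Ioc_right hσ.2))
      (hv.mono_set (Set.Ioc_subset_Ioc_left hσ.1.le)) (f := v) (μ := volume)
    rw [Set.Ioc_union_Ioc_eq_Ioc hσ.1.le hσ.2] at hunion
    rw [hunion]
    abel
  -- integrability of the two inner products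
  have hC : ∀ σ ∈ Set.Ioc s t, ‖W σ‖ ≤ ∫ τ in Set.Ioc s t, ‖v τ‖ := by
    intro σ hσ
    calc ‖W σ‖ ≤ ∫ τ in Set.Ioc s σ, ‖v τ‖ := norm_integral_le_integral_norm _
    _ ≤ ∫ τ in Set.Ioc s t, ‖v τ‖ := by
        refine setIntegral_mono_set hv.norm ?_ ?_
        · filter_upwards with τ using norm_nonneg _
        · exact HasSubset.Subset.eventuallyLE (Set.Ioc_subset_Ioc_right hσ.2)
  have hint1 : Integrable (fun σ => ⟪W σ, v σ⟫) μ := by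
    refine Integrable.mono' (hv.norm.const_mul (∫ τ in Set.Ioc s t, ‖v τ‖))
      (hWmeas.inner hvmeas) ?_
    rw [hμ, ae_restrict_iff' measurableSet_Ioc]
    filter_upwards with σ hσ
    calc ‖⟪W σ, v σ⟫‖ ≤ ‖W σ‖ * ‖v σ‖ := abs_real_inner_le_norm _ _
    _ ≤ (∫ τ in Set.Ioc s t, ‖v τ‖) * ‖v σ‖ :=
        mul_le_mul_of_nonneg_right (hC σ hσ) (norm_nonneg _)
  have hint2 : Integrable (fun σ => ⟪(∫ τ in Set.Ioc s t, v τ), v σ⟫) μ :=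
    hv.const_inner _
  -- put it together
  have hfinal : ∫ σ in Set.Ioc s t, ⟪(∫ τ in Set.Ioc s t, v τ) - W σ, v σ⟫ =
      ‖∫ τ in Set.Ioc s t, v τ‖ ^ 2 - ∫ σ in Set.Ioc s t, ⟪v σ, W σ⟫ := by
    have e4 : ∀ σ, ⟪(∫ τ in Set.Ioc s t, v τ) - W σ, v σ⟫ =
        ⟪(∫ τ in Set.Ioc s t, v τ), v σ⟫ - ⟪W σ, v σ⟫ := fun σ => inner_sub_left _ _ _
    simp_rw [e4]
    rw [integral_sub hint2 hint1]
    congr 1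
    · rw [integral_inner hv, real_inner_self_eq_norm_sq]
    · exact setIntegral_congr_fun measurableSet_Ioc fun σ _ => real_inner_comm _ _
  rw [hL] at hswap
  rw [hR, hfinal] at hswap
  linarith

lemma gronwall_aux (a b ψ : ℝ → ℝ) (t' T : ℝ) (hT : t' ≤ T)
    (ha : IntervalIntegrable a volume t' T) (hb : IntervalIntegrable b volume t' T)
    (ha0 : ∀ τ ∈ Set.Icc t' T, 0 ≤ a τ) (hb0 : ∀ τ ∈ Set.Icc t' T, 0 ≤ b τ)
    (hψc : ContinuousOn ψ (Set.Icc t' T)) (hψ0 : ∀ τ ∈ Set.Icc t' T, 0 ≤ ψ τ)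
    (key : ∀ s t, t' ≤ s → s ≤ t → t ≤ T →
      ψ t ≤ ψ s - (∫ τ in s..t, a τ * ψ τ) + ∫ τ in s..t, b τ) :
    ψ T ≤ Real.exp (-(∫ τ in t'..T, a τ)) *
      ((∫ τ in t'..T, b τ * Real.exp (∫ x in t'..τ, a x)) + ψ t') := by
  have hIcc : Set.uIcc t' T = Set.Icc t' T := Set.uIcc_of_le hT
  -- sub-interval integrability
  have hsuba : ∀ s t, s ∈ Set.Icc t' T → t ∈ Set.Icc t' T → IntervalIntegrable a volume s t := by
    intro s t hs ht
    refine ha.mono_set ?_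
    rw [hIcc]; exact Set.uIcc_subset_Icc hs ht
  have hsubb : ∀ s t, s ∈ Set.Icc t' T → t ∈ Set.Icc t' T → IntervalIntegrable b volume s t := by
    intro s t hs ht
    refine hb.mono_set ?_
    rw [hIcc]; exact Set.uIcc_subset_Icc hs ht
  set A : ℝ → ℝ := fun x => ∫ τ in t'..x, a τ with hA
  set E : ℝ → ℝ := fun x => Real.exp (A x) with hE
  set B : ℝ → ℝ := fun x => ∫ τ in t'..x, b τ with hB
  set Bw : ℝ → ℝ := fun x => ∫ τ in t'..x, b τ * E τ with hBw
  set G : ℝ → ℝ := fun x => E x * ψ x - Bw x with hG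
  -- continuity
  have hAc : ContinuousOn A (Set.Icc t' T) := by
    have := intervalIntegral.continuousOn_primitive_interval' ha Set.left_mem_uIcc
    rwa [hIcc] at this
  have hEc : ContinuousOn E (Set.Icc t' T) := Real.continuous_exp.comp_continuousOn hAc
  have hBc : ContinuousOn B (Set.Icc t' T) := by
    have := intervalIntegral.continuousOn_primitive_interval' hb Set.left_mem_uIcc
    rwa [hIcc] at this
  have hbE : IntervalIntegrable (fun τ => b τ * E τ) volume t' T := by
    refine hb.mul_continuousOn ?_
    rwa [hIcc]
  have hsubbE : ∀ s t, s ∈ Set.Icc t' T → t ∈ Set.Icc t' T →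
      IntervalIntegrable (fun τ => b τ * E τ) volume s t := by
    intro s t hs ht
    refine hbE.mono_set ?_
    rw [hIcc]; exact Set.uIcc_subset_Icc hs ht
  have hsubaψ : ∀ s t, s ∈ Set.Icc t' T → t ∈ Set.Icc t' T →
      IntervalIntegrable (fun τ => a τ * ψ τ) volume s t := by
    intro s t hs ht
    refine (hsuba s t hs ht).mul_continuousOn (hψc.mono ?_)
    rw [hIcc] at *
    exact (Set.uIcc_subset_Icc hs ht)
  have hBwc : ContinuousOn Bw (Set.Icc t' T) := by
    have := intervalIntegral.continuousOn_primitive_interval' hbE Set.left_mem_uIcc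
    rwa [hIcc] at this
  have hGc : ContinuousOn G (Set.Icc t' T) := (hEc.mul hψc).sub hBwc
  -- monotonicity facts for A, B, E
  have hAdiff : ∀ s t, s ∈ Set.Icc t' T → t ∈ Set.Icc t' T →
      A t - A s = ∫ τ in s..t, a τ := by
    intro s t hs ht
    exact intervalIntegral.integral_interval_sub_left (hsuba t' t (Set.left_mem_Icc.2 hT) ht)
      (hsuba t' s (Set.left_mem_Icc.2 hT) hs)
  have hBdiff : ∀ s t, s ∈ Set.Icc t' T → t ∈ Set.Icc t' T →
      B t - B s = ∫ τ in s..t, b τ := by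
    intro s t hs ht
    exact intervalIntegral.integral_interval_sub_left (hsubb t' t (Set.left_mem_Icc.2 hT) ht)
      (hsubb t' s (Set.left_mem_Icc.2 hT) hs)
  have hBwdiff : ∀ s t, s ∈ Set.Icc t' T → t ∈ Set.Icc t' T →
      Bw t - Bw s = ∫ τ in s..t, b τ * E τ := by
    intro s t hs ht
    exact intervalIntegral.integral_interval_sub_left
      (hsubbE t' t (Set.left_mem_Icc.2 hT) ht) (hsubbE t' s (Set.left_mem_Icc.2 hT) hs)
  have hAmono : ∀ s t, s ∈ Set.Icc t' T → t ∈ Set.Icc t' T → s ≤ t → A s ≤ A t := by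
    intro s t hs ht hst
    have h1 : 0 ≤ ∫ τ in s..t, a τ := by
      refine intervalIntegral.integral_nonneg hst (fun τ hτ => ha0 τ ?_)
      exact ⟨le_trans hs.1 hτ.1, le_trans hτ.2 ht.2⟩
    have := hAdiff s t hs ht
    linarith
  have hEmono : ∀ s t, s ∈ Set.Icc t' T → t ∈ Set.Icc t' T → s ≤ t → E s ≤ E t := by
    intro s t hs ht hst
    exact Real.exp_le_exp.2 (hAmono s t hs ht hst)
  have hA0 : A t' = 0 := intervalIntegral.integral_same
  have hAnn : ∀ t ∈ Set.Icc t' T, 0 ≤ A t := by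
    intro t ht
    have := hAmono t' t (Set.left_mem_Icc.2 hT) ht ht.1
    rw [hA0] at this; exact this
  have hTmem : T ∈ Set.Icc t' T := Set.right_mem_Icc.2 hT
  have ht'mem : t' ∈ Set.Icc t' T := Set.left_mem_Icc.2 hT
  -- the main claim
  have main : ∀ ε : ℝ, 0 < ε → G T ≤ ψ t' + ε * (E T * A T + B T) := by
    intro ε hε
    set S : Set ℝ := Set.Icc t' T ∩
      (fun x => G x - ε * (E T * A x + B x)) ⁻¹' (Set.Iic (ψ t')) with hS
    have hScl : IsClosed S := by
      refine ContinuousOn.preimage_isClosed_of_isClosed ?_ isClosed_Icc isClosed_Iic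
      exact hGc.sub (continuousOn_const.mul ((continuousOn_const.mul hAc).add hBc))
    have hSmem : ∀ x, x ∈ S ↔ x ∈ Set.Icc t' T ∧ G x ≤ ψ t' + ε * (E T * A x + B x) := by
      intro x
      simp only [hS, Set.mem_inter_iff, Set.mem_preimage, Set.mem_Iic]
      constructor
      · rintro ⟨h1, h2⟩; exact ⟨h1, by linarith⟩
      · rintro ⟨h1, h2⟩; exact ⟨h1, by linarith⟩
    have ht'S : t' ∈ S := by
      rw [hSmem]
      refine ⟨ht'mem, ?_⟩
      have hGt' : G t' = ψ t' := by
        simp only [hG, hE, hBw, hA, hB, intervalIntegral.integral_same, Real.exp_zero]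
        ring
      rw [hGt', hA0]
      simp only [hB, intervalIntegral.integral_same]
      have : 0 ≤ ε * (E T * 0 + 0) := by simp
      linarith
    have hbdd : BddAbove S := ⟨T, fun x hx => ((hSmem x).1 hx).1.2⟩
    have hne : S.Nonempty := ⟨t', ht'S⟩
    set c := sSup S with hc
    have hcS : c ∈ S := hScl.csSup_mem hne hbdd
    have hcIcc : c ∈ Set.Icc t' T := ((hSmem c).1 hcS).1
    have hcG : G c ≤ ψ t' + ε * (E T * A c + B c) := ((hSmem c).1 hcS).2
    rcases eq_or_lt_of_le hcIcc.2 with hcT | hcT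
    · rw [hcT] at hcG; exact hcG
    · exfalso
      -- continuity of ψ and E at c from within
      obtain ⟨δ₁, hδ₁, hδ₁p⟩ := Metric.continuousWithinAt_iff.1 (hψc c hcIcc) ε hε
      obtain ⟨δ₂, hδ₂, hδ₂p⟩ := Metric.continuousWithinAt_iff.1 (hEc c hcIcc) ε hε
      set δ := min δ₁ δ₂ with hδ
      have hδpos : 0 < δ := lt_min hδ₁ hδ₂
      set t₂ := min (c + δ / 2) T with ht₂
      have hct₂ : c < t₂ := lt_min (by linarith) hcT
      have ht₂T : t₂ ≤ T := min_le_right _ _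
      have ht₂Icc : t₂ ∈ Set.Icc t' T := ⟨le_trans hcIcc.1 hct₂.le, ht₂T⟩
      have hmemIcc : ∀ τ ∈ Set.Icc c t₂, τ ∈ Set.Icc t' T := by
        intro τ hτ
        exact ⟨le_trans hcIcc.1 hτ.1, le_trans hτ.2 ht₂T⟩
      have hdist : ∀ τ ∈ Set.Icc c t₂, dist τ c < δ := by
        intro τ hτ
        rw [Real.dist_eq, abs_of_nonneg (by linarith [hτ.1])]
        have : τ ≤ c + δ / 2 := le_trans hτ.2 (min_le_left _ _)
        linarith
      have hψosc : ∀ τ ∈ Set.Icc c t₂, ψ c - ψ τ ≤ ε := by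
        intro τ hτ
        have := hδ₁p (hmemIcc τ hτ) (lt_of_lt_of_le (hdist τ hτ) (min_le_left _ _))
        rw [Real.dist_eq] at this
        have := abs_lt.1 this
        linarith [this.1]
      have hEosc : ∀ τ ∈ Set.Icc c t₂, E t₂ - E τ ≤ ε := by
        intro τ hτ
        have h1 := hδ₂p (hmemIcc t₂ (Set.right_mem_Icc.2 hct₂.le))
          (lt_of_lt_of_le (hdist t₂ (Set.right_mem_Icc.2 hct₂.le)) (min_le_right _ _))
        rw [Real.dist_eq] at h1
        have h2 := abs_lt.1 h1
        have h3 : E c ≤ E τ := hEmono c τ hcIcc (hmemIcc τ hτ) hτ.1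
        linarith [h2.1]
      -- key estimate on [c, t₂]
      have hkey := key c t₂ hcIcc.1 hct₂.le ht₂T
      have hEt₂pos : 0 < E t₂ := Real.exp_pos _
      have hETpos : 0 < E T := Real.exp_pos _
      have hEt₂T : E t₂ ≤ E T := hEmono t₂ T ht₂Icc hTmem ht₂T
      have hψc0 : 0 ≤ ψ c := hψ0 c hcIcc
      -- (3): E t₂ - E c ≤ E t₂ * (A t₂ - A c)
      have h3 : E t₂ - E c ≤ E t₂ * (A t₂ - A c) := by
        have := Real.add_one_le_exp (A c - A t₂)
        have hEq : Real.exp (A c - A t₂) = E c / E t₂ := by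
          rw [Real.exp_sub]
        rw [hEq] at this
        have h4 : (A c - A t₂ + 1) * E t₂ ≤ E c := by
          rw [div_eq_inv_mul] at this
          have h := mul_le_mul_of_nonneg_right this hEt₂pos.le
          have h2 : (E t₂)⁻¹ * E c * E t₂ = E c := by field_simp
          linarith
        nlinarith
      -- (5): E t₂ * ((A t₂ - A c) * ψ c - ∫ aψ) ≤ E T * (ε * (A t₂ - A c))
      have hΔA : A t₂ - A c = ∫ τ in c..t₂, a τ := hAdiff c t₂ hcIcc ht₂Icc
      have hΔAnn : 0 ≤ A t₂ - A c := by linarith [hAmono c t₂ hcIcc ht₂Icc hct₂.le]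
      have h5 : (A t₂ - A c) * ψ c - (∫ τ in c..t₂, a τ * ψ τ) ≤ ε * (A t₂ - A c) := by
        have e1 : (A t₂ - A c) * ψ c = ∫ τ in c..t₂, a τ * ψ c := by
          rw [hΔA, ← intervalIntegral.integral_mul_const]
        have e2 : (A t₂ - A c) * ψ c - (∫ τ in c..t₂, a τ * ψ τ)
            = ∫ τ in c..t₂, (a τ * ψ c - a τ * ψ τ) := by
          rw [e1, ← intervalIntegral.integral_sub
            ((hsuba c t₂ hcIcc ht₂Icc).mul_const _) (hsubaψ c t₂ hcIcc ht₂Icc)]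
        rw [e2]
        have e3 : ε * (A t₂ - A c) = ∫ τ in c..t₂, ε * a τ := by
          rw [hΔA, ← intervalIntegral.integral_const_mul]
        rw [e3]
        refine intervalIntegral.integral_mono_on hct₂.le
          (((hsuba c t₂ hcIcc ht₂Icc).mul_const _).sub (hsubaψ c t₂ hcIcc ht₂Icc))
          ((hsuba c t₂ hcIcc ht₂Icc).const_mul _) (fun τ hτ => ?_)
        have h6 : 0 ≤ a τ := ha0 τ (hmemIcc τ hτ)
        have h7 := hψosc τ hτ
        nlinarith
      -- (6): E t₂ * (∫ b) - (Bw t₂ - Bw c) ≤ ε * (B t₂ - B c)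
      have hΔB : B t₂ - B c = ∫ τ in c..t₂, b τ := hBdiff c t₂ hcIcc ht₂Icc
      have hΔBw : Bw t₂ - Bw c = ∫ τ in c..t₂, b τ * E τ := hBwdiff c t₂ hcIcc ht₂Icc
      have h6 : E t₂ * (∫ τ in c..t₂, b τ) - (Bw t₂ - Bw c) ≤ ε * (B t₂ - B c) := by
        have e1 : E t₂ * (∫ τ in c..t₂, b τ) - (Bw t₂ - Bw c)
            = ∫ τ in c..t₂, (b τ * E t₂ - b τ * E τ) := by
          have e0 : E t₂ * (∫ τ in c..t₂, b τ) = ∫ τ in c..t₂, b τ * E t₂ := by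
            rw [intervalIntegral.integral_mul_const]; ring
          rw [hΔBw, e0, ← intervalIntegral.integral_sub
            ((hsubb c t₂ hcIcc ht₂Icc).mul_const _) (hsubbE c t₂ hcIcc ht₂Icc)]
        rw [e1, hΔB]
        have e3 : ε * (∫ τ in c..t₂, b τ) = ∫ τ in c..t₂, ε * b τ := by
          rw [← intervalIntegral.integral_const_mul]
        rw [e3]
        refine intervalIntegral.integral_mono_on hct₂.le
          (((hsubb c t₂ hcIcc ht₂Icc).mul_const _).sub (hsubbE c t₂ hcIcc ht₂Icc))
          ((hsubb c t₂ hcIcc ht₂Icc).const_mul _) (fun τ hτ => ?_)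
        have h7 : 0 ≤ b τ := hb0 τ (hmemIcc τ hτ)
        have h8 := hEosc τ hτ
        nlinarith
      -- combine
      have hBnn : 0 ≤ ∫ τ in c..t₂, b τ := by
        refine intervalIntegral.integral_nonneg hct₂.le (fun τ hτ => hb0 τ (hmemIcc τ hτ))
      have hGest : G t₂ ≤ G c + ε * (E T * (A t₂ - A c) + (B t₂ - B c)) := by
        have k1 : E t₂ * ψ t₂ ≤ E t₂ * ψ c - E t₂ * (∫ τ in c..t₂, a τ * ψ τ)
            + E t₂ * (∫ τ in c..t₂, b τ) := by
          nlinarith [mul_le_mul_of_nonneg_left hkey hEt₂pos.le]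
        have k2 : E t₂ * ((A t₂ - A c) * ψ c - (∫ τ in c..t₂, a τ * ψ τ))
            ≤ E T * (ε * (A t₂ - A c)) := by
          calc E t₂ * ((A t₂ - A c) * ψ c - (∫ τ in c..t₂, a τ * ψ τ))
              ≤ E t₂ * (ε * (A t₂ - A c)) := mul_le_mul_of_nonneg_left h5 hEt₂pos.le
          _ ≤ E T * (ε * (A t₂ - A c)) := by
              refine mul_le_mul_of_nonneg_right hEt₂T ?_
              positivity
        have k3 : (E t₂ - E c) * ψ c ≤ E t₂ * (A t₂ - A c) * ψ c :=
          mul_le_mul_of_nonneg_right h3 hψc0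
        have hGd : G t₂ - G c = E t₂ * ψ t₂ - E c * ψ c - (Bw t₂ - Bw c) := by
          simp only [hG]; ring
        nlinarith
      rw [hSmem c] at hcS
      have ht₂S : t₂ ∈ S := by
        rw [hSmem]
        refine ⟨ht₂Icc, ?_⟩
        have := hcS.2
        nlinarith
      have := le_csSup hbdd ht₂S
      rw [← hc] at this
      linarith
  -- conclude
  have hGT : G T ≤ ψ t' := by
    by_contra hcon
    push_neg at hcon
    set K := E T * A T + B T with hK
    have hKnn : 0 ≤ K := by
      have h1 : 0 ≤ A T := hAnn T hTmem
      have h2 : 0 ≤ B T := by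
        refine intervalIntegral.integral_nonneg hT (fun τ hτ => hb0 τ hτ)
      have h3 : 0 < E T := Real.exp_pos _
      have h4 := mul_nonneg h3.le h1
      linarith
    have hη : 0 < (G T - ψ t') / (2 * (K + 1)) := div_pos (by linarith) (by linarith)
    have := main _ hη
    have h4 : (G T - ψ t') / (2 * (K + 1)) * K < G T - ψ t' := by
      rw [div_mul_eq_mul_div, div_lt_iff₀ (by positivity)]
      nlinarith
    linarith
  -- final rearrangement
  have hETpos : 0 < E T := Real.exp_pos _
  have hfin : E T * ψ T ≤ Bw T + ψ t' := by
    simp only [hG] at hGT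
    linarith
  rw [Real.exp_neg]
  rw [inv_mul_eq_div, le_div_iff₀ hETpos]
  calc ψ T * E T = E T * ψ T := by ring
  _ ≤ Bw T + ψ t' := hfin

-- integrability of the inner product with the primitive
lemma inner_primitive_integrable_s6 {H : Type*} [NormedAddCommGroup H] [InnerProductSpace ℝ H]
    [CompleteSpace H] (v : ℝ → H) (s t : ℝ)
    (hv : IntegrableOn v (Set.Ioc s t)) :
    IntegrableOn (fun τ => ⟪v τ, ∫ σ in Set.Ioc s τ, v σ⟫) (Set.Ioc s t) := by
  set μ : Measure ℝ := volume.restrict (Set.Ioc s t) with hμ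
  set W : ℝ → H := fun τ => ∫ σ in Set.Ioc s τ, v σ with hW
  have hvmeas : AEStronglyMeasurable v μ := hv.aestronglyMeasurable
  have hvIcc : IntegrableOn v (Set.Icc s t) :=
    (integrableOn_Icc_iff_integrableOn_Ioc).2 hv
  have hWcont : ContinuousOn W (Set.Icc s t) := intervalIntegral.continuousOn_primitive hvIcc
  have hWmeas : AEStronglyMeasurable W μ :=
    (hWcont.mono Set.Ioc_subset_Icc_self).aestronglyMeasurable measurableSet_Ioc
  have hC : ∀ σ ∈ Set.Ioc s t, ‖W σ‖ ≤ ∫ τ in Set.Ioc s t, ‖v τ‖ := by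
    intro σ hσ
    calc ‖W σ‖ ≤ ∫ τ in Set.Ioc s σ, ‖v τ‖ := norm_integral_le_integral_norm _
    _ ≤ ∫ τ in Set.Ioc s t, ‖v τ‖ := by
        refine setIntegral_mono_set hv.norm ?_ ?_
        · filter_upwards with τ using norm_nonneg _
        · exact HasSubset.Subset.eventuallyLE (Set.Ioc_subset_Ioc_right hσ.2)
  refine Integrable.mono' (hv.norm.const_mul (∫ τ in Set.Ioc s t, ‖v τ‖))
    (hvmeas.inner hWmeas) ?_
  rw [ae_restrict_iff' measurableSet_Ioc]
  filter_upwards with σ hσ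
  calc ‖⟪v σ, W σ⟫‖ ≤ ‖v σ‖ * ‖W σ‖ := abs_real_inner_le_norm _ _
  _ ≤ ‖v σ‖ * (∫ τ in Set.Ioc s t, ‖v τ‖) :=
      mul_le_mul_of_nonneg_left (hC σ hσ) (norm_nonneg _)
  _ = (∫ τ in Set.Ioc s t, ‖v τ‖) * ‖v σ‖ := by ring
theorem stmt_6
    {H : Type*} [NormedAddCommGroup H] [InnerProductSpace ℝ H] [CompleteSpace H]
    (T : H → H)
    (hT : ∀ (y x : H), T x = x → ‖T y - x‖ ≤ ‖y - x‖)
    (hfix : ∃ x : H, T x = x)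
    (hdemi : ∀ (x : ℕ → H) (p : H),
      (∀ y : H, Tendsto (fun k => ⟪x k, y⟫) atTop (nhds ⟪p, y⟫)) →
      Tendsto (fun k => ‖T (x k) - x k‖) atTop (nhds 0) → T p = p)
    (t₀ : ℝ) (ht₀ : 0 < t₀)
    (θ : ℝ → ℝ) (hθ : ∀ t, t₀ ≤ t → 0 ≤ θ t)
    (hθint : ∀ b : ℝ, IntervalIntegrable θ volume t₀ b)
    (f : ℝ → H)
    (hfint : IntegrableOn (fun s => ‖f s‖) (Set.Ici t₀))
    (u : ℝ → H) (u₀ : H)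
    (huint : ∀ t, t₀ ≤ t →
      IntervalIntegrable (fun s => θ s • (T (u s) - u s) + f s) volume t₀ t)
    (husol : ∀ t, t₀ ≤ t →
      u t = u₀ + ∫ s in t₀..t, (θ s • (T (u s) - u s) + f s))
    (uhat : H) (huhat : T uhat = uhat)
    (hweak : ∀ y : H, Tendsto (fun t => ⟪u t, y⟫) atTop (nhds ⟪uhat, y⟫))
    (r κ : ℝ) (hr : 0 < r) (hκ : 0 < κ)
    (hsub : ∀ z : H, ‖z - uhat‖ < r →
      Metric.infDist z {x : H | T x = x} ≤ κ * ‖z - T z‖)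
    (L : ℝ) (hlim : Tendsto (fun t => ‖u t - uhat‖) atTop (nhds L)) (hLr : L < r) :
    ∃ t' M₁ : ℝ, t₀ ≤ t' ∧ 0 < M₁ ∧ ∀ t, t' ≤ t →
      Metric.infDist (u t) {x : H | T x = x} ^ 2 ≤
        Real.exp (-(1 / κ ^ 2) * ∫ s in t'..t, θ s) *
          (M₁ * (∫ s in t'..t, ‖f s‖ * Real.exp ((1 / κ ^ 2) * ∫ x in t'..s, θ x))
            + ‖u t' - uhat‖ ^ 2) := by
  classical
  set Fix : Set H := {x : H | T x = x} with hFix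
  have hFne : Fix.Nonempty := hfix
  set v : ℝ → H := fun s => θ s • (T (u s) - u s) + f s with hv
  set ψ : ℝ → ℝ := fun τ => Metric.infDist (u τ) Fix ^ 2 with hψ
  set a : ℝ → ℝ := fun τ => 1 / κ ^ 2 * θ τ with ha
  -- choose t'
  have hev : ∀ᶠ τ in atTop, ‖u τ - uhat‖ < r := hlim.eventually_lt_const hLr
  obtain ⟨t₁, ht₁⟩ := eventually_atTop.1 hev
  set t' : ℝ := max t₀ t₁ with ht'
  have ht't₀ : t₀ ≤ t' := le_max_left _ _
  have hball : ∀ τ, t' ≤ τ → ‖u τ - uhat‖ < r := fun τ h => ht₁ τ (le_trans (le_max_right _ _) h)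
  set M₁ : ℝ := 6 * r + 2 with hM₁
  have hM₁pos : 0 < M₁ := by rw [hM₁]; linarith
  set b : ℝ → ℝ := fun τ => M₁ * ‖f τ‖ with hb
  refine ⟨t', M₁, ht't₀, hM₁pos, ?_⟩
  intro t ht
  -- basic continuity of u
  have ucont : ∀ Z, t₀ ≤ Z → ContinuousOn u (Set.Icc t₀ Z) := by
    intro Z hZ
    have h1 : ContinuousOn (fun x => u₀ + ∫ s in t₀..x, v s) (Set.Icc t₀ Z) := by
      refine continuousOn_const.add ?_
      have h2 := intervalIntegral.continuousOn_primitive_interval' (huint Z hZ)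
        Set.left_mem_uIcc
      rwa [Set.uIcc_of_le hZ] at h2
    exact h1.congr (fun x hx => husol x hx.1)
  have hψcont : ∀ Z, t' ≤ Z → ContinuousOn ψ (Set.Icc t' Z) := by
    intro Z hZ
    have h1 : ContinuousOn u (Set.Icc t' Z) :=
      (ucont Z (le_trans ht't₀ hZ)).mono (Set.Icc_subset_Icc_left ht't₀)
    exact ((Metric.continuous_infDist_pt Fix).comp_continuousOn h1).pow 2
  have hψnn : ∀ τ, 0 ≤ ψ τ := fun τ => sq_nonneg _
  have hψlt : ∀ τ, t' ≤ τ → Metric.infDist (u τ) Fix < r := by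
    intro τ hτ
    calc Metric.infDist (u τ) Fix ≤ dist (u τ) uhat := Metric.infDist_le_dist_of_mem huhat
    _ = ‖u τ - uhat‖ := dist_eq_norm _ _
    _ < r := hball τ hτ
  -- sub-interval integrability of θ, a, b
  have hθsub : ∀ s q, t' ≤ s → s ≤ q → IntervalIntegrable θ volume s q := by
    intro s q hs hsq
    refine (hθint q).mono_set ?_
    rw [Set.uIcc_of_le hsq, Set.uIcc_of_le (le_trans ht't₀ (le_trans hs hsq))]
    exact Set.Icc_subset_Icc (le_trans ht't₀ hs) le_rfl
  have hasub : ∀ s q, t' ≤ s → s ≤ q → IntervalIntegrable a volume s q := by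
    intro s q hs hsq
    exact (hθsub s q hs hsq).const_mul _
  have hbsub : ∀ s q, t' ≤ s → s ≤ q → IntervalIntegrable b volume s q := by
    intro s q hs hsq
    refine IntervalIntegrable.const_mul ?_ _
    rw [intervalIntegrable_iff_integrableOn_Ioc_of_le hsq]
    exact hfint.mono_set (fun x hx => le_trans (le_trans ht't₀ hs) hx.1.le)
  have haψsub : ∀ s q, t' ≤ s → s ≤ q → IntervalIntegrable (fun τ => a τ * ψ τ) volume s q := by
    intro s q hs hsq
    refine (hasub s q hs hsq).mul_continuousOn ?_
    rw [Set.uIcc_of_le hsq]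
    exact (hψcont q (le_trans hs hsq)).mono (Set.Icc_subset_Icc hs le_rfl)
  -- the key integral inequality
  have key : ∀ s q, t' ≤ s → s ≤ q →
      ψ q ≤ ψ s - (∫ τ in s..q, a τ * ψ τ) + ∫ τ in s..q, b τ := by
    intro s q hs hsq
    have hst₀ : t₀ ≤ s := le_trans ht't₀ hs
    have hqt₀ : t₀ ≤ q := le_trans hst₀ hsq
    have hvIoc : IntegrableOn v (Set.Ioc s q) := by
      have h1 := (intervalIntegrable_iff_integrableOn_Ioc_of_le hqt₀).1 (huint q hqt₀)
      exact h1.mono_set (Set.Ioc_subset_Ioc_left hst₀)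
    set W : ℝ → H := fun τ => ∫ σ in Set.Ioc s τ, v σ with hW
    have huW : ∀ τ, s ≤ τ → u τ = u s + W τ := by
      intro τ hτ
      have h1 := husol τ (le_trans hst₀ hτ)
      have h2 := husol s hst₀
      have h3 : u τ - u s = ∫ σ in s..τ, v σ := by
        rw [h1, h2]
        have h4 := intervalIntegral.integral_interval_sub_left
          (huint τ (le_trans hst₀ hτ)) (huint s hst₀)
        rw [← h4]; abel
      have h5 : (∫ σ in s..τ, v σ) = W τ := intervalIntegral.integral_of_le hτ
      rw [← h5]
      rw [← h3]; abel
    -- the ε-approximation step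
    have hstep : ∀ ε : ℝ, 0 < ε → ε ≤ 1 →
        ψ q ≤ ψ s + ε * (2 * r + 1) - (∫ τ in s..q, a τ * ψ τ) + ∫ τ in s..q, b τ := by
      intro ε hε hε1
      obtain ⟨x, hxF, hdx⟩ := (Metric.infDist_lt_iff hFne).1
        (lt_add_of_pos_right (Metric.infDist (u s) Fix) hε)
      have hxfix : T x = x := hxF
      have hds : Metric.infDist (u s) Fix < r := hψlt s hs
      have husx : ‖u s - x‖ < r + 1 := by
        rw [← dist_eq_norm]
        calc dist (u s) x < Metric.infDist (u s) Fix + ε := hdx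
        _ < r + 1 := by linarith
      -- energy identity
      have henergy : ‖u q - x‖ ^ 2 =
          ‖u s - x‖ ^ 2 + 2 * ∫ τ in Set.Ioc s q, ⟪v τ, u τ - x⟫ := by
        have hA : ‖W q‖ ^ 2 = 2 * ∫ τ in Set.Ioc s q, ⟪v τ, W τ⟫ :=
          energy_aux v s q hsq hvIoc
        have hi1 : Integrable (fun τ => ⟪v τ, u s - x⟫) (volume.restrict (Set.Ioc s q)) :=
          hvIoc.inner_const _
        have hi2 : Integrable (fun τ => ⟪v τ, W τ⟫) (volume.restrict (Set.Ioc s q)) :=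
          inner_primitive_integrable_s6 v s q hvIoc
        have hc1 : ∫ τ in Set.Ioc s q, ⟪v τ, u τ - x⟫ =
            ∫ τ in Set.Ioc s q, (⟪v τ, u s - x⟫ + ⟪v τ, W τ⟫) := by
          refine setIntegral_congr_fun measurableSet_Ioc (fun τ hτ => ?_)
          rw [huW τ hτ.1.le]
          rw [show u s + W τ - x = (u s - x) + W τ by abel, inner_add_right]
        have hc2 : ∫ τ in Set.Ioc s q, ⟪v τ, u s - x⟫ = ⟪u s - x, W q⟫ := by
          rw [show (fun τ => (⟪v τ, u s - x⟫ : ℝ)) = fun τ => ⟪u s - x, v τ⟫ from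
            funext fun τ => real_inner_comm _ _]
          exact integral_inner (𝕜 := ℝ) hvIoc _
        have hnorm : u q - x = (u s - x) + W q := by
          rw [huW q hsq]; abel
        rw [hnorm, norm_add_sq_real, hc1, integral_add hi1 hi2, hc2]
        linarith [hA]
      -- pointwise bound
      have hpt : ∀ τ ∈ Set.Ioc s q, 2 * ⟪v τ, u τ - x⟫ ≤ -(a τ * ψ τ) + b τ := by
        intro τ hτ
        have hτt' : t' ≤ τ := le_trans hs hτ.1.le
        have hτt₀ : t₀ ≤ τ := le_trans ht't₀ hτt'
        have hθτ : 0 ≤ θ τ := hθ τ hτt₀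
        have he1 : (⟪v τ, u τ - x⟫ : ℝ) =
            θ τ * ⟪T (u τ) - u τ, u τ - x⟫ + ⟪f τ, u τ - x⟫ := by
          simp only [hv, inner_add_left, real_inner_smul_left]
        have hq1 : ‖T (u τ) - x‖ ≤ ‖u τ - x‖ := hT (u τ) x hxfix
        have hq2 : ‖T (u τ) - x‖ ^ 2 ≤ ‖u τ - x‖ ^ 2 :=
          pow_le_pow_left₀ (norm_nonneg _) hq1 2
        have he2 : 2 * ⟪T (u τ) - u τ, u τ - x⟫ ≤ -‖T (u τ) - u τ‖ ^ 2 := by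
          have h := norm_add_sq_real (T (u τ) - u τ) (u τ - x)
          rw [sub_add_sub_cancel] at h
          nlinarith
        have he3 : ψ τ ≤ κ ^ 2 * ‖T (u τ) - u τ‖ ^ 2 := by
          have h1 := hsub (u τ) (hball τ hτt')
          have h2 : Metric.infDist (u τ) Fix ^ 2 ≤ (κ * ‖u τ - T (u τ)‖) ^ 2 :=
            pow_le_pow_left₀ Metric.infDist_nonneg h1 2
          simp only [hψ]
          calc Metric.infDist (u τ) Fix ^ 2 ≤ (κ * ‖u τ - T (u τ)‖) ^ 2 := h2
          _ = κ ^ 2 * ‖u τ - T (u τ)‖ ^ 2 := by ring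
          _ = κ ^ 2 * ‖T (u τ) - u τ‖ ^ 2 := by rw [norm_sub_rev]
        have he4 : (⟪f τ, u τ - x⟫ : ℝ) ≤ ‖f τ‖ * ‖u τ - x‖ := real_inner_le_norm _ _
        have he5 : ‖u τ - x‖ ≤ 3 * r + 1 := by
          have h1 : u τ - x = (u τ - uhat) + (uhat - u s) + (u s - x) := by abel
          rw [h1]
          have h2 := norm_add₃_le (a := u τ - uhat) (b := uhat - u s) (c := u s - x)
          have h3 : ‖uhat - u s‖ = ‖u s - uhat‖ := norm_sub_rev _ _
          have h4 := hball τ hτt'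
          have h5 := hball s hs
          rw [h3] at h2
          linarith [h2, husx]
        have hκ2 : 0 < κ ^ 2 := by positivity
        have hθψ : a τ * ψ τ ≤ θ τ * ‖T (u τ) - u τ‖ ^ 2 := by
          simp only [ha]
          rw [div_mul_eq_mul_div, one_mul, div_mul_eq_mul_div, div_le_iff₀ hκ2]
          calc θ τ * ψ τ ≤ θ τ * (κ ^ 2 * ‖T (u τ) - u τ‖ ^ 2) :=
            mul_le_mul_of_nonneg_left he3 hθτ
          _ = θ τ * ‖T (u τ) - u τ‖ ^ 2 * κ ^ 2 := by ring
        have hfτ : 0 ≤ ‖f τ‖ := norm_nonneg _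
        rw [he1]
        simp only [hb]
        have hmul : θ τ * (2 * ⟪T (u τ) - u τ, u τ - x⟫) ≤ θ τ * (-‖T (u τ) - u τ‖ ^ 2) :=
          mul_le_mul_of_nonneg_left he2 hθτ
        have hfb : 2 * ⟪f τ, u τ - x⟫ ≤ M₁ * ‖f τ‖ := by
          simp only [hM₁]
          nlinarith
        nlinarith [hmul, hθψ, hfb]
      -- integrate the bound
      have hint1 : IntegrableOn (fun τ => 2 * ⟪v τ, u τ - x⟫) (Set.Ioc s q) := by
        have hi1 : Integrable (fun τ => ⟪v τ, u s - x⟫) (volume.restrict (Set.Ioc s q)) :=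
          hvIoc.inner_const _
        have hi2 : Integrable (fun τ => ⟪v τ, W τ⟫) (volume.restrict (Set.Ioc s q)) :=
          inner_primitive_integrable_s6 v s q hvIoc
        refine ((hi1.add hi2).const_mul 2).congr ?_
        filter_upwards [ae_restrict_mem measurableSet_Ioc] with τ hτ
        rw [huW τ hτ.1.le]
        rw [show u s + W τ - x = (u s - x) + W τ by abel, inner_add_right]
        simp [Pi.add_apply]
      have hint2 : IntegrableOn (fun τ => -(a τ * ψ τ) + b τ) (Set.Ioc s q) := by
        have h1 := (haψsub s q hs hsq).1
        have h2 := (hbsub s q hs hsq).1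
        exact h1.neg.add h2
      have hmono := setIntegral_mono_on hint1 hint2 measurableSet_Ioc hpt
      have hsplit : ∫ τ in Set.Ioc s q, (-(a τ * ψ τ) + b τ) =
          -(∫ τ in s..q, a τ * ψ τ) + ∫ τ in s..q, b τ := by
        have h1 := (haψsub s q hs hsq).1
        have h2 := (hbsub s q hs hsq).1
        simp only [neg_add_eq_sub]
        rw [integral_sub h2 h1, intervalIntegral.integral_of_le hsq,
          intervalIntegral.integral_of_le hsq]
      have hlhs : ∫ τ in Set.Ioc s q, 2 * ⟪v τ, u τ - x⟫ =
          2 * ∫ τ in Set.Ioc s q, ⟪v τ, u τ - x⟫ := integral_const_mul 2 _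
      have hψq : ψ q ≤ ‖u q - x‖ ^ 2 := by
        simp only [hψ]
        refine pow_le_pow_left₀ Metric.infDist_nonneg ?_ 2
        rw [← dist_eq_norm]
        exact Metric.infDist_le_dist_of_mem hxF
      have hψs : ‖u s - x‖ ^ 2 ≤ ψ s + ε * (2 * r + 1) := by
        have h1 : ‖u s - x‖ < Metric.infDist (u s) Fix + ε := by
          rw [← dist_eq_norm]; exact hdx
        have h2 : 0 ≤ ‖u s - x‖ := norm_nonneg _
        have h3 : 0 ≤ Metric.infDist (u s) Fix := Metric.infDist_nonneg
        simp only [hψ]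
        nlinarith
      rw [hlhs, hsplit] at hmono
      linarith [henergy, hψq, hψs, hmono]
    -- remove ε
    by_contra hcon
    push_neg at hcon
    set d : ℝ := ψ q - (ψ s - (∫ τ in s..q, a τ * ψ τ) + ∫ τ in s..q, b τ) with hd
    have hdpos : 0 < d := by rw [hd]; linarith
    have h2r : 0 < 2 * r + 1 := by linarith
    set ε : ℝ := min 1 (d / (2 * (2 * r + 1))) with hε
    have hεpos : 0 < ε := lt_min one_pos (by positivity)
    have hε1 : ε ≤ 1 := min_le_left _ _
    have := hstep ε hεpos hε1
    have hεd : ε * (2 * r + 1) < d := by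
      have h1 : ε ≤ d / (2 * (2 * r + 1)) := min_le_right _ _
      have h2 : ε * (2 * r + 1) ≤ d / (2 * (2 * r + 1)) * (2 * r + 1) :=
        mul_le_mul_of_nonneg_right h1 h2r.le
      have h3 : d / (2 * (2 * r + 1)) * (2 * r + 1) = d / 2 := by
        field_simp
      linarith
    rw [hd] at hεd
    linarith
  -- apply Gronwall
  have hgron := gronwall_aux a b ψ t' t ht (hasub t' t le_rfl ht) (hbsub t' t le_rfl ht)
    (fun τ hτ => by
      have := hθ τ (le_trans ht't₀ hτ.1)
      rw [ha]; positivity)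
    (fun τ hτ => by rw [hb]; positivity)
    (hψcont t ht) (fun τ _ => hψnn τ)
    (fun s q hs hsq _ => key s q hs hsq)
  -- massage into the stated form
  have r1 : ∀ x : ℝ, (∫ τ in t'..x, a τ) = 1 / κ ^ 2 * ∫ τ in t'..x, θ τ := by
    intro x
    simp only [ha]
    exact intervalIntegral.integral_const_mul _ _
  have r2 : (∫ τ in t'..t, b τ * Real.exp (∫ x in t'..τ, a x)) =
      M₁ * ∫ τ in t'..t, ‖f τ‖ * Real.exp (1 / κ ^ 2 * ∫ x in t'..τ, θ x) := by
    have h1 : (fun τ => b τ * Real.exp (∫ x in t'..τ, a x)) =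
        fun τ => M₁ * (‖f τ‖ * Real.exp (1 / κ ^ 2 * ∫ x in t'..τ, θ x)) := by
      funext τ
      simp only [hb]
      rw [r1 τ]
      ring
    rw [h1]
    exact intervalIntegral.integral_const_mul _ _
  have hψt' : ψ t' ≤ ‖u t' - uhat‖ ^ 2 := by
    simp only [hψ]
    refine pow_le_pow_left₀ Metric.infDist_nonneg ?_ 2
    rw [← dist_eq_norm]
    exact Metric.infDist_le_dist_of_mem huhat
  rw [r1, r2] at hgron
  have hexp : Real.exp (-(1 / κ ^ 2 * ∫ τ in t'..t, θ τ)) =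
      Real.exp (-(1 / κ ^ 2) * ∫ s in t'..t, θ s) := by
    congr 1
    ring
  rw [hexp] at hgron
  calc Metric.infDist (u t) Fix ^ 2 = ψ t := rfl
  _ ≤ Real.exp (-(1 / κ ^ 2) * ∫ s in t'..t, θ s) *
      ((M₁ * ∫ τ in t'..t, ‖f τ‖ * Real.exp (1 / κ ^ 2 * ∫ x in t'..τ, θ x)) + ψ t') := hgron
  _ ≤ Real.exp (-(1 / κ ^ 2) * ∫ s in t'..t, θ s) *
      ((M₁ * ∫ τ in t'..t, ‖f τ‖ * Real.exp (1 / κ ^ 2 * ∫ x in t'..τ, θ x))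
        + ‖u t' - uhat‖ ^ 2) := by
      refine mul_le_mul_of_nonneg_left ?_ (Real.exp_pos _).le
      linarith
  _ = Real.exp (-(1 / κ ^ 2) * ∫ s in t'..t, θ s) *
      (M₁ * (∫ s in t'..t, ‖f s‖ * Real.exp (1 / κ ^ 2 * ∫ x in t'..s, θ x))
        + ‖u t' - uhat‖ ^ 2) := rfl
end

section
/- Let A : H → H be a single-valued α-monotone operator which is Lipschitz continuous with constant l ≥ |α|, and let B : H ⇉ H be maximally β-monotone. Suppose the parameters satisfy (C2): α + β ≥ 0, γ, δ > 0, λ, μ ≥ 1, 1 + 2γα > 0, 2 − 2γβ ≤ μ ≤ 2 + 2γα, (λ − 1)(μ − 1) = 1 and δ = (λ − 1)γ, together with μ ≠ 2 + 2γα. Then the operator T = R_{δB}^{μ} ∘ R_{γA}^{λ} is Lipschitz continuous with constant ζ = √( 1 − λ(μ−1)²[(λ−1)(2+2γα) − λ] / (1 + 2γα + γ²l²) ), and ζ < 1. -/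
open MeasureTheory Filter Set
open scoped RealInnerProductSpace

private lemma exp_sub' {H : Type*} [NormedAddCommGroup H] [InnerProductSpace ℝ H]
    (a b : ℝ) (x y : H) :
    ‖a • x - b • y‖ ^ 2 = a^2 * ‖x‖^2 - 2*a*b*⟪x, y⟫ + b^2 * ‖y‖^2 := by
  rw [norm_sub_sq_real, real_inner_smul_left, real_inner_smul_right,
    norm_smul, norm_smul, mul_pow, mul_pow, Real.norm_eq_abs, Real.norm_eq_abs,
    sq_abs, sq_abs]
  ring

private lemma exp_add' {H : Type*} [NormedAddCommGroup H] [InnerProductSpace ℝ H]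
    (a b : ℝ) (x y : H) :
    ‖a • x + b • y‖ ^ 2 = a^2 * ‖x‖^2 + 2*a*b*⟪x, y⟫ + b^2 * ‖y‖^2 := by
  rw [norm_add_sq_real, real_inner_smul_left, real_inner_smul_right,
    norm_smul, norm_smul, mul_pow, mul_pow, Real.norm_eq_abs, Real.norm_eq_abs,
    sq_abs, sq_abs]
  ring

set_option maxHeartbeats 1000000 in
theorem stmt_17
    {H : Type*} [NormedAddCommGroup H] [InnerProductSpace ℝ H] [CompleteSpace H]
    (α β γ δ lam μ l : ℝ)
    (A : H → H)
    (hAmono : ∀ x y : H, α * ‖x - y‖ ^ 2 ≤ ⟪x - y, A x - A y⟫)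
    (hAlip : ∀ x y : H, ‖A x - A y‖ ≤ l * ‖x - y‖)
    (hl : |α| ≤ l)
    (B : H → Set H)
    (hBmono : ∀ x y xp yp : H, xp ∈ B x → yp ∈ B y →
      β * ‖x - y‖ ^ 2 ≤ ⟪x - y, xp - yp⟫)
    (hBmax : ∀ x xp : H,
      (∀ y yp : H, yp ∈ B y → β * ‖x - y‖ ^ 2 ≤ ⟪x - y, xp - yp⟫) → xp ∈ B x)
    (JA JB : H → H)
    (hJA : ∀ x : H, x = JA x + γ • A (JA x))
    (hJB : ∀ x : H, ∃ b ∈ B (JB x), x = JB x + δ • b)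
    (RA RB T : H → H)
    (hRA : ∀ x : H, RA x = (1 - lam) • x + lam • JA x)
    (hRB : ∀ x : H, RB x = (1 - μ) • x + μ • JB x)
    (hTdef : ∀ x : H, T x = RB (RA x))
    (hC2 : 0 ≤ α + β ∧ 0 < γ ∧ 0 < δ ∧ 1 ≤ lam ∧ 1 ≤ μ ∧ 0 < 1 + 2 * γ * α ∧
      2 - 2 * γ * β ≤ μ ∧ μ ≤ 2 + 2 * γ * α ∧ (lam - 1) * (μ - 1) = 1 ∧
      δ = (lam - 1) * γ)
    (hμne : μ ≠ 2 + 2 * γ * α)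
    (ζ : ℝ)
    (hζ : ζ = Real.sqrt (1 - lam * (μ - 1) ^ 2 * ((lam - 1) * (2 + 2 * γ * α) - lam)
      / (1 + 2 * γ * α + γ ^ 2 * l ^ 2))) :
    (∀ x y : H, ‖T x - T y‖ ≤ ζ * ‖x - y‖) ∧ ζ < 1 := by
  obtain ⟨hc1, hγ, hδ, hlam, hμ, hγα, hμlow, hμhigh, hlamμ, hδγ⟩ := hC2
  have hl0 : 0 ≤ l := le_trans (abs_nonneg α) hl
  have hα2 : α ^ 2 ≤ l ^ 2 := by nlinarith [sq_abs α, abs_nonneg α]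
  have hDpos : (0:ℝ) < 1 + 2 * γ * α + γ ^ 2 * l ^ 2 := by nlinarith [sq_nonneg (γ * l)]
  have hμlt : μ < 2 + 2 * γ * α := lt_of_le_of_ne hμhigh hμne
  set κ : ℝ := (1 + 2 * γ * α + γ ^ 2 * l ^ 2 - μ * (2 + 2 * γ * α - μ)) /
      (1 + 2 * γ * α + γ ^ 2 * l ^ 2) with hκdef
  have hNnn : (0:ℝ) ≤ 1 + 2 * γ * α + γ ^ 2 * l ^ 2 - μ * (2 + 2 * γ * α - μ) := by
    nlinarith [sq_nonneg (μ - 1 - γ * α)]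
  have hκnn : 0 ≤ κ := div_nonneg hNnn hDpos.le
  have hκlt : κ < 1 := by
    rw [hκdef, div_lt_one hDpos]
    nlinarith
  have hκD : κ * (1 + 2 * γ * α + γ ^ 2 * l ^ 2)
      = 1 + 2 * γ * α + γ ^ 2 * l ^ 2 - μ * (2 + 2 * γ * α - μ) := by
    rw [hκdef]; field_simp
  have hkey : lam * (μ - 1) ^ 2 * ((lam - 1) * (2 + 2 * γ * α) - lam)
      = μ * (2 + 2 * γ * α - μ) := by
    linear_combination ((2+2*γ*α)*((lam-1)*(μ-1)+μ) - (lam-1)*(μ-1) + 1 - 2*μ) * hlamμ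
  have hζκ : ζ = Real.sqrt κ := by
    rw [hζ, hκdef, hkey]
    congr 1
    field_simp
  have hδμ : δ * (μ - 1) = γ := by
    linear_combination (μ - 1) * hδγ + γ * hlamμ
  -- core squared estimate
  have core : ∀ x y : H, ‖T x - T y‖ ^ 2 ≤ κ * ‖x - y‖ ^ 2 := by
    intro x y
    obtain ⟨b, hb, hxb⟩ := hJB (RA x)
    obtain ⟨b', hb', hyb⟩ := hJB (RA y)
    set v : H := JA x - JA y with hv
    set w : H := A (JA x) - A (JA y) with hw
    set t : H := JB (RA x) - JB (RA y) with ht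
    set f : H := b - b' with hf
    have hu : x - y = v + γ • w := by
      rw [hv, hw]
      linear_combination (norm := module) hJA x - hJA y
    have hS : RA x - RA y = v - δ • w := by
      rw [hv, hw, hδγ]
      linear_combination (norm := module) hRA x - hRA y + (1 - lam) • hJA x
        - (1 - lam) • hJA y
    have hSf : RA x - RA y = t + δ • f := by
      rw [ht, hf]
      linear_combination (norm := module) hxb - hyb
    have hTd : T x - T y = μ • t - (μ - 1) • (RA x - RA y) := by
      rw [ht, hTdef x, hTdef y, hRB (RA x), hRB (RA y)]
      module
    have hmonoA : α * ‖v‖ ^ 2 ≤ ⟪v, w⟫ := hAmono (JA x) (JA y)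
    have hlipA : ‖w‖ ≤ l * ‖v‖ := hAlip (JA x) (JA y)
    have hmonoB : β * ‖t‖ ^ 2 ≤ ⟪t, f⟫ := hBmono _ _ _ _ hb hb'
    have hw2 : ‖w‖ ^ 2 ≤ l ^ 2 * ‖v‖ ^ 2 := by
      nlinarith [norm_nonneg w, norm_nonneg v]
    have hitS : ⟪t, RA x - RA y⟫ = ‖t‖ ^ 2 + δ * ⟪t, f⟫ := by
      rw [hSf, inner_add_right, real_inner_smul_right, real_inner_self_eq_norm_sq]
    have hS2 : ‖RA x - RA y‖ ^ 2 = ‖v‖ ^ 2 - 2 * δ * ⟪v, w⟫ + δ ^ 2 * ‖w‖ ^ 2 := by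
      rw [hS, show v - δ • w = (1:ℝ) • v - δ • w by rw [one_smul], exp_sub']
      ring
    have hxy2 : ‖x - y‖ ^ 2 = ‖v‖ ^ 2 + 2 * γ * ⟪v, w⟫ + γ ^ 2 * ‖w‖ ^ 2 := by
      rw [hu, show v + γ • w = (1:ℝ) • v + γ • w by rw [one_smul], exp_add']
      ring
    have hTd2 : ‖T x - T y‖ ^ 2
        = μ ^ 2 * ‖t‖ ^ 2 - 2 * μ * (μ - 1) * (‖t‖ ^ 2 + δ * ⟪t, f⟫)
          + (μ - 1) ^ 2 * (‖v‖ ^ 2 - 2 * δ * ⟪v, w⟫ + δ ^ 2 * ‖w‖ ^ 2) := by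
      rw [hTd, exp_sub', hitS, hS2]
    -- Step A
    have e0 : (0:ℝ) ≤ 2 * μ * (μ - 1) * δ := by
      have : (0:ℝ) ≤ μ - 1 := by linarith
      positivity
    have eA : 2 * μ * (μ - 1) * δ * (β * ‖t‖ ^ 2) ≤ 2 * μ * (μ - 1) * δ * ⟪t, f⟫ :=
      mul_le_mul_of_nonneg_left hmonoB e0
    have eA2 : 2 * μ * (μ - 1) * δ * (β * ‖t‖ ^ 2) = 2 * μ * γ * β * ‖t‖ ^ 2 := by
      linear_combination (2 * μ * β * ‖t‖ ^ 2) * hδμ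
    have eA3 : μ * (2 - μ - 2 * γ * β) * ‖t‖ ^ 2 ≤ 0 := by
      have h0 : 2 - μ - 2 * γ * β ≤ 0 := by linarith
      nlinarith [mul_nonneg (show (0:ℝ) ≤ μ by linarith) (sq_nonneg ‖t‖)]
    have stepA : μ ^ 2 * ‖t‖ ^ 2 - 2 * μ * (μ - 1) * (‖t‖ ^ 2 + δ * ⟪t, f⟫) ≤ 0 := by
      linarith [eA, eA2, eA3]
    -- Step B
    have eB1 : 2 * γ * (κ + μ - 1) * (α * ‖v‖ ^ 2) ≤ 2 * γ * (κ + μ - 1) * ⟪v, w⟫ :=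
      mul_le_mul_of_nonneg_left hmonoA
        (mul_nonneg (by linarith : (0:ℝ) ≤ 2 * γ) (by linarith))
    have eB2 : γ ^ 2 * (1 - κ) * ‖w‖ ^ 2 ≤ γ ^ 2 * (1 - κ) * (l ^ 2 * ‖v‖ ^ 2) :=
      mul_le_mul_of_nonneg_left hw2
        (mul_nonneg (sq_nonneg γ) (by linarith))
    have eB3 : κ * (1 + 2 * γ * α + γ ^ 2 * l ^ 2) * ‖v‖ ^ 2
        = (1 + 2 * γ * α + γ ^ 2 * l ^ 2 - μ * (2 + 2 * γ * α - μ)) * ‖v‖ ^ 2 := by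
      rw [hκD]
    have eB4 : (μ - 1) ^ 2 * δ ^ 2 * ‖w‖ ^ 2 = γ ^ 2 * ‖w‖ ^ 2 := by
      linear_combination ((μ - 1) * δ + γ) * ‖w‖ ^ 2 * hδμ
    have eB5 : (μ - 1) ^ 2 * (2 * δ) * ⟪v, w⟫ = 2 * γ * (μ - 1) * ⟪v, w⟫ := by
      linear_combination (2 * (μ - 1) * ⟪v, w⟫) * hδμ
    have stepB : (μ - 1) ^ 2 * (‖v‖ ^ 2 - 2 * δ * ⟪v, w⟫ + δ ^ 2 * ‖w‖ ^ 2)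
        ≤ κ * (‖v‖ ^ 2 + 2 * γ * ⟪v, w⟫ + γ ^ 2 * ‖w‖ ^ 2) := by
      linarith [eB1, eB2, eB3, eB4, eB5]
    rw [hTd2, hxy2]
    linarith [stepA, stepB]
  constructor
  · intro x y
    have h2 := core x y
    have h3 : ‖T x - T y‖ ≤ Real.sqrt (κ * ‖x - y‖ ^ 2) := by
      rw [← Real.sqrt_sq (norm_nonneg (T x - T y))]
      exact Real.sqrt_le_sqrt h2
    rwa [Real.sqrt_mul hκnn, Real.sqrt_sq (norm_nonneg _), ← hζκ] at h3
  · rw [hζκ]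
    have h4 := Real.sqrt_lt_sqrt hκnn hκlt
    rwa [Real.sqrt_one] at h4
end
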